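/- arXiv:1608.07495 — 8 statements merged into one kernel-verified Lean document; each statement's English description precedes it below -/
import Mathlib

section
/- For any bounded linear operator T: X → Y between Banach spaces, SS(T) ≤ 2χ(T), where SS(T) = sup over infinite-dimensional closed subspaces M of X of inf_{x ∈ S_M} ‖Tx‖, and χ(T) is the Hausdorff measure of noncompactness of T(B_X). -/
open NormedSpace Metric Set Filter
open scoped ENNReal

noncomputable section

/-- Hausdorff measure of noncompactness of a set. -/
def hchi {Y : Type*} [SeminormedAddCommGroup Y] (A : Set Y) : ℝ :=
  sInf { r : ℝ | ∃ F : Finset Y, ∀ a ∈ A, ∃ y ∈ F, dist a y ≤ r }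

variable {X Y Z : Type*} [NormedAddCommGroup X] [NormedSpace ℝ X]
  [NormedAddCommGroup Y] [NormedSpace ℝ Y]

/-- χ(T) = Hausdorff measure of noncompactness of T(B_X). -/
def chiOp (T : X →L[ℝ] Y) : ℝ := hchi (T '' closedBall 0 1)

/-- SS(T): the quantity measuring strict singularity. -/
def SS (T : X →L[ℝ] Y) : ℝ :=
  sSup { c : ℝ | ∃ M : Submodule ℝ X, IsClosed (M : Set X) ∧ ¬ FiniteDimensional ℝ M ∧
      c = sInf { r : ℝ | ∃ x ∈ M, ‖x‖ = 1 ∧ r = ‖T x‖ } }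

/-- SS_Z(T): the quantity measuring Z-strict singularity. -/
def SSZ (Z : Type*) [NormedAddCommGroup Z] [NormedSpace ℝ Z] (T : X →L[ℝ] Y) : ℝ :=
  sSup { r : ℝ | ∃ R : Z →L[ℝ] X, ∃ c : ℝ, 0 < c ∧ (∀ z, c * ‖z‖ ≤ ‖T (R z)‖) ∧ r = c / ‖R‖ }

/-- The adjoint (dual) operator T* : Y* → X*. -/
def adjOp (T : X →L[ℝ] Y) : StrongDual ℝ Y →L[ℝ] StrongDual ℝ X :=
  (ContinuousLinearMap.compL ℝ X Y ℝ).flip T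

/-- δ(S) for a (surjective) map S: the supremum of δ > 0 with δ·B ⊆ S(B). -/
def deltaQ {W : Type*} [SeminormedAddCommGroup W] (S : X → W) : ℝ :=
  sSup { d : ℝ | 0 < d ∧ ∀ w : W, ‖w‖ ≤ d → ∃ x : X, ‖x‖ ≤ 1 ∧ S x = w }

/-- SCS(T): the quantity measuring strict cosingularity. -/
def SCS (T : X →L[ℝ] Y) : ℝ :=
  sSup { r : ℝ | ∃ N : Submodule ℝ Y, IsClosed (N : Set Y) ∧ ¬ FiniteDimensional ℝ (Y ⧸ N) ∧
      Function.Surjective (fun x : X => (Submodule.Quotient.mk (T x) : Y ⧸ N)) ∧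
      r = deltaQ (fun x : X => (Submodule.Quotient.mk (T x) : Y ⧸ N)) }

/-- SCS_Z(T): the quantity measuring Z-strict cosingularity. -/
def SCSZ (Z : Type*) [NormedAddCommGroup Z] [NormedSpace ℝ Z] (T : X →L[ℝ] Y) : ℝ :=
  sSup { r : ℝ | ∃ S : Y →L[ℝ] Z, Function.Surjective (fun x : X => S (T x)) ∧
      r = deltaQ (fun x : X => S (T x)) / ‖S‖ }

/-- The annihilator M^⊥ in the continuous dual. -/
def annih (M : Submodule ℝ X) : Submodule ℝ (StrongDual ℝ X) where
  carrier := { f | ∀ x ∈ M, f x = 0 }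
  add_mem' := by intro f g hf hg x hx; simp [hf x hx, hg x hx]
  zero_mem' := by intro x _; simp
  smul_mem' := by intro c f hf x hx; simp [hf x hx]

/-- The quantity wk_Z(A) measuring weak non-compactness. -/
def wkk (Z : Type*) [NormedAddCommGroup Z] [NormedSpace ℝ Z] (A : Set Z) : ℝ :=
  sSup { r : ℝ | ∃ φ : StrongDual ℝ (StrongDual ℝ Z),
      StrongDual.toWeakDual φ ∈ closure (StrongDual.toWeakDual '' (inclusionInDoubleDual ℝ Z '' A)) ∧
      r = Metric.infDist φ (Set.range (inclusionInDoubleDual ℝ Z)) }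

/-- A Banach space is λ-subprojective. -/
def Subprojective (lam : ℝ) (Y : Type*) [NormedAddCommGroup Y] [NormedSpace ℝ Y] : Prop :=
  ∀ M : Submodule ℝ Y, IsClosed (M : Set Y) → ¬ FiniteDimensional ℝ M →
    ∃ N : Submodule ℝ Y, N ≤ M ∧ IsClosed (N : Set Y) ∧ ¬ FiniteDimensional ℝ N ∧
      ∃ P : Y →L[ℝ] Y, ‖P‖ ≤ lam ∧ LinearMap.range (P : Y →ₗ[ℝ] Y) = N ∧ ∀ y, P (P y) = P y

/-- A Banach space is λ-superprojective. -/
def Superprojective (lam : ℝ) (Y : Type*) [NormedAddCommGroup Y] [NormedSpace ℝ Y] : Prop :=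
  ∀ M : Submodule ℝ Y, IsClosed (M : Set Y) → ¬ FiniteDimensional ℝ (Y ⧸ M) →
    ∃ N : Submodule ℝ Y, M ≤ N ∧ IsClosed (N : Set Y) ∧ ¬ FiniteDimensional ℝ (Y ⧸ N) ∧
      ∃ P : Y →L[ℝ] Y, ‖P‖ ≤ lam ∧ LinearMap.range (P : Y →ₗ[ℝ] Y) = N ∧ ∀ y, P (P y) = P y

end



theorem key_lemma {X Y : Type*} [NormedAddCommGroup X] [NormedSpace ℝ X]
    [NormedAddCommGroup Y] [NormedSpace ℝ Y] (T : X →L[ℝ] Y)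
    (M : Submodule ℝ X) (hM : ¬ FiniteDimensional ℝ M) {ε : ℝ} (hε : 0 < ε) :
    ∃ x ∈ M, ‖x‖ = 1 ∧ ‖T x‖ ≤ 2 * chiOp T + ε := by
  classical
  set C : Set ℝ := { r : ℝ | ∃ F : Finset Y, ∀ a ∈ T '' Metric.closedBall (0:X) 1,
      ∃ y ∈ F, dist a y ≤ r } with hC
  have hchiC : chiOp T = sInf C := rfl
  have hCne : C.Nonempty := by
    refine ⟨‖T‖, {0}, ?_⟩
    rintro a ⟨x, hx, rfl⟩
    refine ⟨0, Finset.mem_singleton_self 0, ?_⟩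
    rw [dist_zero_right]
    calc ‖T x‖ ≤ ‖T‖ * ‖x‖ := T.le_opNorm x
      _ ≤ ‖T‖ * 1 := by
          have := Metric.mem_closedBall.1 hx
          rw [dist_zero_right] at this
          exact mul_le_mul_of_nonneg_left this (norm_nonneg T)
      _ = ‖T‖ := mul_one _
  have hCnonneg : ∀ r ∈ C, 0 ≤ r := by
    rintro r ⟨F, hF⟩
    obtain ⟨y, -, hy⟩ := hF (T 0) ⟨0, by simp, rfl⟩
    exact le_trans dist_nonneg hy
  have hCbdd : BddBelow C := ⟨0, hCnonneg⟩
  set χ := chiOp T with hχ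
  have hχ0 : 0 ≤ χ := hchiC ▸ Real.sInf_nonneg hCnonneg
  -- choose a good radius r
  obtain ⟨r, hrC, hr⟩ : ∃ r ∈ C, r < sInf C + ε/4 :=
    Real.lt_sInf_add_pos hCne (by linarith)
  rw [← hchiC] at hr
  have hr0 : 0 ≤ r := hCnonneg r hrC
  obtain ⟨F, hF⟩ := hrC
  -- choose R > 1 with 2*r*R < 2*χ + ε
  set R : ℝ := (2*χ + 3*ε/4)/(2*χ + ε/2) with hR
  have hden : 0 < 2*χ + ε/2 := by linarith
  have hR1 : 1 < R := by
    rw [hR, lt_div_iff₀ hden]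
    linarith
  have hRr : 2 * r * R < 2*χ + ε := by
    have h1 : 2 * r * R ≤ (2*χ + ε/2) * R := by
      apply mul_le_mul_of_nonneg_right (by linarith) (by linarith)
    have h2 : (2*χ + ε/2) * R = 2*χ + 3*ε/4 := by
      rw [hR]; field_simp
    linarith
  -- by contradiction
  by_contra hcon
  push_neg at hcon
  have key : ∀ x ∈ M, (2*χ + ε) * ‖x‖ ≤ ‖T x‖ := by
    intro x hx
    rcases eq_or_ne x 0 with rfl | hx0
    · simp
    · have hnx : (0:ℝ) < ‖x‖ := norm_pos_iff.2 hx0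
      set u := ‖x‖⁻¹ • x with hu
      have huM : u ∈ M := M.smul_mem _ hx
      have hun : ‖u‖ = 1 := by
        rw [hu, norm_smul, norm_inv, norm_norm, inv_mul_cancel₀ hnx.ne']
      have hTu : ‖T u‖ = ‖x‖⁻¹ * ‖T x‖ := by
        rw [hu, map_smul, norm_smul, norm_inv, norm_norm]
      have this : (2*χ + ε) < ‖x‖⁻¹ * ‖T x‖ := by
        have h := hcon u huM hun
        rwa [hTu] at h
      calc (2*χ + ε) * ‖x‖ ≤ (‖x‖⁻¹ * ‖T x‖) * ‖x‖ :=
            mul_le_mul_of_nonneg_right this.le hnx.le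
        _ = ‖T x‖ := by field_simp
  -- Riesz sequence in M
  obtain ⟨c, hc1, hcR⟩ : ∃ c : ℝ, 1 < ‖c‖ ∧ ‖c‖ < R :=
    ⟨(1+R)/2, by rw [Real.norm_eq_abs, abs_of_pos (by linarith)]; linarith,
      by rw [Real.norm_eq_abs, abs_of_pos (by linarith)]; linarith⟩
  obtain ⟨f, hfR, hfsep⟩ := exists_seq_norm_le_one_le_norm_sub' hc1 hcR hM
  -- images in the ball
  have hRpos : (0:ℝ) < R := by linarith
  have hmem : ∀ n : ℕ, R⁻¹ • (f n : X) ∈ Metric.closedBall (0:X) 1 := by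
    intro n
    rw [Metric.mem_closedBall, dist_zero_right, norm_smul, norm_inv,
      Real.norm_eq_abs, abs_of_pos hRpos]
    rw [inv_mul_le_iff₀ hRpos, mul_one]
    exact hfR n
  choose g hgF hgd using fun n => hF (T (R⁻¹ • (f n : X))) ⟨_, hmem n, rfl⟩
  obtain ⟨m, n, hmn, hgeq⟩ := Finite.exists_ne_map_eq_of_infinite
    (fun k => (⟨g k, hgF k⟩ : {y // y ∈ F}))
  have hgeq' : g m = g n := congrArg Subtype.val hgeq
  have hdist : dist (T (R⁻¹ • (f m : X))) (T (R⁻¹ • (f n : X))) ≤ 2 * r := by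
    calc dist (T (R⁻¹ • (f m : X))) (T (R⁻¹ • (f n : X)))
        ≤ dist (T (R⁻¹ • (f m : X))) (g m) + dist (g n) (T (R⁻¹ • (f n : X))) := by
          rw [hgeq']; exact dist_triangle _ _ _
      _ ≤ r + r := add_le_add (hgd m) (by rw [dist_comm]; exact hgd n)
      _ = 2 * r := by ring
  have hdist2 : dist (T (R⁻¹ • (f m : X))) (T (R⁻¹ • (f n : X)))
      = R⁻¹ * ‖T ((f m : X) - (f n : X))‖ := by
    rw [dist_eq_norm, ← map_sub, ← smul_sub, map_smul, norm_smul, norm_inv,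
      Real.norm_eq_abs, abs_of_pos hRpos]
  have hsep : (1:ℝ) ≤ ‖(f m : X) - (f n : X)‖ := hfsep hmn
  have hlow : 2*χ + ε ≤ ‖T ((f m : X) - (f n : X))‖ := by
    have hmem' : (f m : X) - (f n : X) ∈ M := M.sub_mem (f m).2 (f n).2
    calc 2*χ + ε = (2*χ + ε) * 1 := (mul_one _).symm
      _ ≤ (2*χ + ε) * ‖(f m : X) - (f n : X)‖ :=
          mul_le_mul_of_nonneg_left hsep (by linarith)
      _ ≤ ‖T ((f m : X) - (f n : X))‖ := key _ hmem'
  have hup : ‖T ((f m : X) - (f n : X))‖ ≤ 2 * r * R := by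
    have := hdist
    rw [hdist2, inv_mul_le_iff₀ hRpos] at this
    linarith [this]
  linarith

theorem stmt0 {X Y : Type*} [NormedAddCommGroup X] [NormedSpace ℝ X] [CompleteSpace X]
    [NormedAddCommGroup Y] [NormedSpace ℝ Y] [CompleteSpace Y] (T : X →L[ℝ] Y) :
    SS T ≤ 2 * chiOp T := by
  have hχ0 : 0 ≤ chiOp T := by
    apply Real.sInf_nonneg
    rintro r ⟨F, hF⟩
    obtain ⟨y, -, hy⟩ := hF (T 0) ⟨0, by simp, rfl⟩
    exact le_trans dist_nonneg hy
  apply Real.sSup_le _ (by linarith)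
  rintro c ⟨M, hMc, hMfd, rfl⟩
  set S : Set ℝ := { r : ℝ | ∃ x ∈ M, ‖x‖ = 1 ∧ r = ‖T x‖ } with hS
  have hSbdd : BddBelow S := ⟨0, by rintro r ⟨x, -, -, rfl⟩; exact norm_nonneg _⟩
  have hεbound : ∀ ε : ℝ, 0 < ε → sInf S ≤ 2 * chiOp T + ε := by
    intro ε hε
    obtain ⟨x, hxM, hx1, hTx⟩ := key_lemma T M hMfd hε
    exact le_trans (csInf_le hSbdd ⟨x, hxM, hx1, rfl⟩) hTx
  exact le_of_forall_pos_le_add hεbound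
end

section
/- If M is an infinite-dimensional closed subspace of a Banach space X, T: X → Y is a bounded operator, and c > 0 satisfies ‖Tx‖ ≥ c‖x‖ for all x ∈ M, then χ(T(B_X)) ≥ c/2. -/
open NormedSpace Metric Set Filter
open scoped ENNReal

theorem stmt1 {X Y : Type*} [NormedAddCommGroup X] [NormedSpace ℝ X] [CompleteSpace X]
    [NormedAddCommGroup Y] [NormedSpace ℝ Y] [CompleteSpace Y] (T : X →L[ℝ] Y)
    (M : Submodule ℝ X) (hMc : IsClosed (M : Set X)) (hMdim : ¬ FiniteDimensional ℝ M)
    (c : ℝ) (hc : 0 < c) (hT : ∀ x ∈ M, c * ‖x‖ ≤ ‖T x‖) :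
    c / 2 ≤ hchi (T '' closedBall 0 1) := by
  apply le_csInf
  · refine ⟨‖T‖, {0}, ?_⟩
    rintro a ⟨x, hx, rfl⟩
    refine ⟨0, Finset.mem_singleton_self 0, ?_⟩
    rw [dist_zero_right]
    calc ‖T x‖ ≤ ‖T‖ * ‖x‖ := T.le_opNorm x
    _ ≤ ‖T‖ * 1 := by
        exact mul_le_mul_of_nonneg_left (by simpa using mem_closedBall_zero_iff.mp hx)
          (norm_nonneg T)
    _ = ‖T‖ := mul_one _
  rintro r ⟨F, hF⟩
  -- Key claim: for every R > 1, c ≤ 2 * r * R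
  have key : ∀ R : ℝ, 1 < R → c ≤ 2 * r * R := by
    intro R hR
    have hc0 : (1 : ℝ) < ‖((1 + R) / 2 : ℝ)‖ := by
      rw [Real.norm_eq_abs, abs_of_pos (by linarith)]; linarith
    have hR0 : ‖((1 + R) / 2 : ℝ)‖ < R := by
      rw [Real.norm_eq_abs, abs_of_pos (by linarith)]; linarith
    obtain ⟨f, hfR, hfsep⟩ :=
      exists_seq_norm_le_one_le_norm_sub' (E := ↥M) hc0 hR0 hMdim
    have hRpos : (0 : ℝ) < R := by linarith
    -- scaled sequence in the unit ball
    set g : ℕ → X := fun n => R⁻¹ • ((f n : X)) with hg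
    have hgball : ∀ n, g n ∈ closedBall (0 : X) 1 := by
      intro n
      rw [mem_closedBall_zero_iff, hg, norm_smul, Real.norm_eq_abs,
        abs_of_pos (inv_pos.mpr hRpos)]
      calc R⁻¹ * ‖(f n : X)‖ ≤ R⁻¹ * R :=
        mul_le_mul_of_nonneg_left (hfR n) (le_of_lt (inv_pos.mpr hRpos))
      _ = 1 := inv_mul_cancel₀ (ne_of_gt hRpos)
    have hchoice : ∀ n : ℕ, ∃ y : F, dist (T (g n)) (y : Y) ≤ r := by
      intro n
      obtain ⟨y, hyF, hy⟩ := hF (T (g n)) ⟨g n, hgball n, rfl⟩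
      exact ⟨⟨y, hyF⟩, hy⟩
    choose φ hφ using hchoice
    obtain ⟨m, n, hmn, heq⟩ := Finite.exists_ne_map_eq_of_infinite φ
    -- distance bound
    have hsep : (1 : ℝ) ≤ ‖(f m : X) - (f n : X)‖ := by
      exact hfsep hmn
    have hmem : (f m : X) - (f n : X) ∈ M := M.sub_mem (f m).2 (f n).2
    have hTlow : c ≤ ‖T ((f m : X) - (f n : X))‖ := by
      calc c = c * 1 := (mul_one c).symm
      _ ≤ c * ‖(f m : X) - (f n : X)‖ := mul_le_mul_of_nonneg_left hsep hc.le
      _ ≤ _ := hT _ hmem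
    have hdist : dist (T (g m)) (T (g n)) ≤ 2 * r := by
      calc dist (T (g m)) (T (g n)) ≤ dist (T (g m)) (φ m : Y) + dist (φ m : Y) (T (g n)) :=
        dist_triangle _ _ _
      _ ≤ r + r := by
          refine add_le_add (hφ m) ?_
          rw [dist_comm, heq]; exact hφ n
      _ = 2 * r := by ring
    have hTg : ‖T (g m) - T (g n)‖ = R⁻¹ * ‖T ((f m : X) - (f n : X))‖ := by
      rw [hg]
      simp only [map_smul, ← smul_sub, norm_smul, Real.norm_eq_abs,
        abs_of_pos (inv_pos.mpr hRpos), map_sub]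
    have : R⁻¹ * c ≤ 2 * r := by
      calc R⁻¹ * c ≤ R⁻¹ * ‖T ((f m : X) - (f n : X))‖ :=
        mul_le_mul_of_nonneg_left hTlow (inv_pos.mpr hRpos).le
      _ = ‖T (g m) - T (g n)‖ := hTg.symm
      _ = dist (T (g m)) (T (g n)) := (dist_eq_norm _ _).symm
      _ ≤ 2 * r := hdist
    calc c = R * (R⁻¹ * c) := by field_simp
    _ ≤ R * (2 * r) := mul_le_mul_of_nonneg_left this hRpos.le
    _ = 2 * r * R := by ring
  -- conclude c ≤ 2 r, i.e. c/2 ≤ r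
  have hr0 : 0 < r := by
    by_contra h
    push_neg at h
    have := key 2 one_lt_two
    nlinarith
  have h2r : c ≤ 2 * r := by
    refine le_of_forall_pos_le_add fun ε hε => ?_
    have hgt : (0:ℝ) < ε / (2 * r) := by positivity
    have hk := key (1 + ε / (2 * r)) (by linarith)
    have heq : 2 * r * (1 + ε / (2 * r)) = 2 * r + ε := by field_simp
    linarith
  linarith
end

section
/- For any bounded operator T: X → c₀, SS_{c₀}(T) = SS(T), where SS_{c₀}(T) = sup{ (‖R‖·‖(TR)^{-1}‖)^{-1} : R: c₀ → X bounded linear such that TR is an isomorphism onto its range } (with sup ∅ = 0) and SS(T) = sup over infinite-dimensional closed subspaces M of X of inf_{x ∈ S_M} ‖Tx‖. -/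
open NormedSpace Metric Set Filter
open scoped ENNReal

section STProof
open Filter Topology

noncomputable section STAux

abbrev STc0 := ZeroAtInftyContinuousMap ℕ ℝ

lemma STcoord_le (f : STc0) (i : ℕ) : |f i| ≤ ‖f‖ := by
  rw [← ZeroAtInftyContinuousMap.norm_toBCF_eq_norm]
  exact f.toBCF.norm_coe_le_norm i

lemma STnorm_le (f : STc0) {C : ℝ} (hC : 0 ≤ C) (h : ∀ i, |f i| ≤ C) : ‖f‖ ≤ C := by
  rw [← ZeroAtInftyContinuousMap.norm_toBCF_eq_norm]
  exact (BoundedContinuousFunction.norm_le hC).mpr h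

lemma STnorm_smul (r : ℝ) (f : STc0) : ‖r • f‖ = ‖r‖ * ‖f‖ := norm_smul r f

lemma STdecay (f : STc0) {δ : ℝ} (hδ : 0 < δ) : ∃ m : ℕ, ∀ i ≥ m, |f i| ≤ δ := by
  have h := ZeroAtInftyContinuousMapClass.zero_at_infty f
  rw [cocompact_eq_atTop] at h
  obtain ⟨N, hN⟩ := (Metric.tendsto_atTop.mp h) δ hδ
  exact ⟨N, fun i hi => by simpa [Real.dist_eq] using (hN i hi).le⟩

def STeval (i : ℕ) : STc0 →L[ℝ] ℝ :=
  LinearMap.mkContinuous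
    { toFun := fun f => f i
      map_add' := fun f g => rfl
      map_smul' := fun c f => rfl } 1
    (fun f => by
      simp only [LinearMap.coe_mk, AddHom.coe_mk, one_mul]
      exact STcoord_le f i)

@[simp] lemma STeval_apply (i : ℕ) (f : STc0) : STeval i f = f i := rfl

def STee (n : ℕ) : STc0 :=
  { toFun := fun i => if i = n then (1:ℝ) else 0
    continuous_toFun := continuous_of_discreteTopology
    zero_at_infty' := by
      rw [cocompact_eq_atTop]
      apply Tendsto.congr' _ tendsto_const_nhds
      filter_upwards [eventually_ge_atTop (n+1)] with i hi
      have : i ≠ n := by omega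
      simp [this] }

lemma STee_norm (n : ℕ) : ‖STee n‖ = 1 := by
  apply le_antisymm
  · refine STnorm_le _ zero_le_one (fun i => ?_)
    show |STee n i| ≤ 1
    by_cases hi : i = n <;> simp [STee, hi]
  · have := STcoord_le (STee n) n
    simpa [STee] using this

theorem STc0_infdim : ¬ FiniteDimensional ℝ STc0 := by
  intro h
  have hli : LinearIndependent ℝ STee := by
    rw [linearIndependent_iff']
    intro s g hsum i hi
    have h2 := congrArg (STeval i) hsum
    rw [map_sum, map_zero] at h2
    have h3 : ∀ j ∈ s, (STeval i) (g j • STee j) = if j = i then g j else 0 := by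
      intro j hj
      by_cases hji : j = i <;> simp [hji, STee, STeval_apply]
      intro hij; exact absurd hij.symm hji
    rw [Finset.sum_congr rfl h3, Finset.sum_ite_eq' s i g] at h2
    simpa [hi] using h2
  have := hli.lt_aleph0_of_finiteDimensional
  simp at this

lemma STfindim_of_ker {M : Type*} [AddCommGroup M] [Module ℝ M] {W : Type*} [AddCommGroup W]
    [Module ℝ W] [FiniteDimensional ℝ W] (Φ : M →ₗ[ℝ] W)
    (h : FiniteDimensional ℝ (LinearMap.ker Φ)) : FiniteDimensional ℝ M := by
  have h3 : FiniteDimensional ℝ (M ⧸ LinearMap.ker Φ) :=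
    Module.Finite.equiv Φ.quotKerEquivRange.symm
  have h4 := rank_quotient_add_rank_of_divisionRing (LinearMap.ker Φ)
  have : Module.rank ℝ M < Cardinal.aleph0 := by
    rw [← h4]
    exact Cardinal.add_lt_aleph0 (Module.rank_lt_aleph0 ℝ _) (Module.rank_lt_aleph0 ℝ _)
  exact Module.rank_lt_aleph0_iff.mp this

lemma STexists_unit {X : Type*} [NormedAddCommGroup X] [NormedSpace ℝ X]
    (M : Submodule ℝ X) (hM : ¬ FiniteDimensional ℝ M) : ∃ x ∈ M, ‖x‖ = 1 := by
  have hbot : M ≠ ⊥ := by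
    intro h
    exact hM (by rw [h]; infer_instance)
  obtain ⟨v, hvM, hv0⟩ := Submodule.ne_bot_iff M |>.mp hbot
  have hn : ‖v‖ ≠ 0 := by simpa using hv0
  refine ⟨‖v‖⁻¹ • v, M.smul_mem _ hvM, ?_⟩
  rw [norm_smul, norm_inv, norm_norm, inv_mul_cancel₀ hn]

/-- Step A : a unit vector in `M` whose image vanishes on an initial segment. -/
lemma STstepA {X : Type*} [NormedAddCommGroup X] [NormedSpace ℝ X]
    (T : X →L[ℝ] STc0) (M : Submodule ℝ X) (hM : ¬ FiniteDimensional ℝ M) (m : ℕ) :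
    ∃ x : X, x ∈ M ∧ ‖x‖ = 1 ∧ ∀ i < m, T x i = 0 := by
  classical
  set Φ : M →ₗ[ℝ] (Fin m → ℝ) :=
    LinearMap.pi (fun i : Fin m => ((STeval i.val).comp T).toLinearMap.comp M.subtype)
  have hker : ¬ FiniteDimensional ℝ (LinearMap.ker Φ) := fun h => hM (STfindim_of_ker Φ h)
  have hbot : LinearMap.ker Φ ≠ ⊥ := by
    intro h
    exact hker (by rw [h]; infer_instance)
  obtain ⟨v, hvker, hv0⟩ := Submodule.ne_bot_iff _ |>.mp hbot
  have hvX : (v : X) ≠ 0 := by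
    intro h
    exact hv0 (Subtype.ext (by exact_mod_cast h))
  have hn : ‖(v : X)‖ ≠ 0 := by simpa using hvX
  refine ⟨‖(v : X)‖⁻¹ • (v : X), M.smul_mem _ v.2, ?_, ?_⟩
  · rw [norm_smul, norm_inv, norm_norm, inv_mul_cancel₀ hn]
  · intro i hi
    have hΦ : Φ v = 0 := hvker
    have h0 : T (v : X) i = 0 := by
      have := congrFun hΦ ⟨i, hi⟩
      simpa [Φ, STeval_apply] using this
    have : T (‖(v:X)‖⁻¹ • (v : X)) = ‖(v:X)‖⁻¹ • T (v : X) := by rw [map_smul]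
    rw [this]
    show ‖(v:X)‖⁻¹ * (T (v : X)) i = 0
    rw [h0, mul_zero]


set_option maxHeartbeats 1000000 in
lemma STkey {X : Type*} [NormedAddCommGroup X] [NormedSpace ℝ X] [CompleteSpace X]
    (T : X →L[ℝ] STc0) (M : Submodule ℝ X) (hMc : IsClosed (M : Set X))
    (hM : ¬ FiniteDimensional ℝ M) {d ε : ℝ} (hd : 0 < d)
    (hdle : ∀ x ∈ M, d * ‖x‖ ≤ ‖T x‖) (hε : 0 < ε) (hε2 : ε < 1/4) :
    ∃ R : STc0 →L[ℝ] X, ∃ c : ℝ, 0 < c ∧ (∀ z, c * ‖z‖ ≤ ‖T (R z)‖) ∧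
      d * (1 - 2*ε) / (1 + ε) ≤ c / ‖R‖ := by
  classical
  set εs : ℕ → ℝ := fun n => ε * (1/2)^(n+1) with hεsdef
  have hεs_pos : ∀ n, 0 < εs n := fun n => by positivity
  have hεs_le : ∀ n, εs n ≤ ε/2 := by
    intro n
    have h1 : (1/2:ℝ)^(n+1) ≤ (1/2)^1 :=
      pow_le_pow_of_le_one (by norm_num) (by norm_num) (by omega)
    have : ε * (1/2:ℝ)^(n+1) ≤ ε * (1/2)^1 := by nlinarith
    calc εs n = ε * (1/2:ℝ)^(n+1) := rfl
    _ ≤ ε * (1/2)^1 := this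
    _ = ε/2 := by ring
  have hgeo : Summable (fun n : ℕ => (1/2:ℝ)^(n+1)) := by
    have h := (summable_geometric_of_lt_one (by norm_num : (0:ℝ) ≤ 1/2) (by norm_num)).mul_right (1/2)
    refine h.congr (fun n => ?_)
    rw [← pow_succ]
  have hgeosum : ∑' n : ℕ, (1/2:ℝ)^(n+1) = 1 := by
    have h1 : (fun n : ℕ => (1/2:ℝ)^(n+1)) = fun n : ℕ => (1/2:ℝ)^n * (1/2) := by
      funext n; rw [← pow_succ]
    rw [h1, tsum_mul_right, tsum_geometric_of_lt_one (by norm_num) (by norm_num)]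
    norm_num
  have hεsSum : Summable εs := hgeo.mul_left ε
  have hεsTsum : ∑' n, εs n = ε := by
    rw [hεsdef, tsum_mul_left, hgeosum, mul_one]
  have hεfin : ∀ t : Finset ℕ, ∑ n ∈ t, εs n ≤ ε := by
    intro t
    calc ∑ n ∈ t, εs n ≤ ∑' n, εs n := Summable.sum_le_tsum t (fun n _ => (hεs_pos n).le) hεsSum
    _ = ε := hεsTsum
  -- one step of the construction
  have step : ∀ n m : ℕ, ∃ p : X × ℕ, p.1 ∈ M ∧ ‖T p.1‖ = 1 ∧ ‖p.1‖ ≤ 1/d ∧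
      (∀ i < m, T p.1 i = 0) ∧ m < p.2 ∧ ∀ i ≥ p.2, |T p.1 i| ≤ εs n := by
    intro n m
    obtain ⟨x, hxM, hx1, hx0⟩ := STstepA T M hM m
    have hTx : d ≤ ‖T x‖ := by have := hdle x hxM; rwa [hx1, mul_one] at this
    have hTxpos : 0 < ‖T x‖ := lt_of_lt_of_le hd hTx
    have hTu : T (‖T x‖⁻¹ • x) = ‖T x‖⁻¹ • T x := map_smul T _ x
    have hns : ‖(‖T x‖⁻¹ : ℝ) • T x‖ = ‖(‖T x‖⁻¹ : ℝ)‖ * ‖T x‖ := STnorm_smul _ _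
    obtain ⟨m0, hm0⟩ := STdecay (‖T x‖⁻¹ • T x) (hεs_pos n)
    refine ⟨(‖T x‖⁻¹ • x, max m0 (m+1)), M.smul_mem _ hxM, ?_, ?_, ?_, ?_, ?_⟩
    · rw [hTu, hns, norm_inv, norm_norm, inv_mul_cancel₀ (ne_of_gt hTxpos)]
    · rw [norm_smul, norm_inv, norm_norm, hx1, mul_one, one_div]
      exact inv_anti₀ hd hTx
    · intro i hi
      rw [hTu]
      show ‖T x‖⁻¹ * (T x) i = 0
      rw [hx0 i hi, mul_zero]
    · exact lt_of_lt_of_le (Nat.lt_succ_self m) (le_max_right _ _)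
    · intro i hi
      rw [hTu]
      exact hm0 i (le_trans (le_max_left _ _) hi)
  -- recursive choice
  let F : ℕ → X × ℕ := fun n => Nat.rec (Classical.choose (step 0 0))
      (fun k ih => Classical.choose (step (k+1) ih.2)) n
  let u : ℕ → X := fun n => (F n).1
  let ms : ℕ → ℕ := fun n => Nat.rec 0 (fun k _ => (F k).2) n
  have hprop : ∀ n, u n ∈ M ∧ ‖T (u n)‖ = 1 ∧ ‖u n‖ ≤ 1/d ∧
      (∀ i < ms n, T (u n) i = 0) ∧ ms n < ms (n+1) ∧ ∀ i ≥ ms (n+1), |T (u n) i| ≤ εs n := by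
    intro n
    cases n with
    | zero => exact Classical.choose_spec (step 0 0)
    | succ k => exact Classical.choose_spec (step (k+1) (F k).2)
  set y : ℕ → STc0 := fun n => T (u n) with hydef
  have huM : ∀ n, u n ∈ M := fun n => (hprop n).1
  have hy1 : ∀ n, ‖y n‖ = 1 := fun n => (hprop n).2.1
  have hud : ∀ n, ‖u n‖ ≤ 1/d := fun n => (hprop n).2.2.1
  have hyz : ∀ n, ∀ i < ms n, y n i = 0 := fun n => (hprop n).2.2.2.1
  have hms : ∀ n, ms n < ms (n+1) := fun n => (hprop n).2.2.2.2.1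
  have hyd : ∀ n, ∀ i ≥ ms (n+1), |y n i| ≤ εs n := fun n => (hprop n).2.2.2.2.2
  have hms_mono : StrictMono ms := strictMono_nat_of_lt_succ hms
  -- block structure : at each coordinate at most one y n is not small
  have hblock : ∀ i : ℕ, ∃ n₀, ∀ n, n ≠ n₀ → |y n i| ≤ εs n := by
    intro i
    rcases Classical.em (∃ n, ms n ≤ i ∧ i < ms (n+1)) with h | h
    · obtain ⟨n₀, hn₀⟩ := h
      refine ⟨n₀, fun n hn => ?_⟩
      rcases lt_or_ge i (ms n) with hlt | hge
      · rw [hyz n i hlt, abs_zero]; exact (hεs_pos n).le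
      · rcases lt_or_ge i (ms (n+1)) with hlt2 | hge2
        · exfalso
          rcases lt_trichotomy n n₀ with hc | hc | hc
          · have : ms (n+1) ≤ ms n₀ := hms_mono.monotone hc
            omega
          · exact hn hc
          · have : ms (n₀+1) ≤ ms n := hms_mono.monotone hc
            omega
        · exact hyd n i hge2
    · push_neg at h
      refine ⟨0, fun n _ => ?_⟩
      rcases lt_or_ge i (ms n) with hlt | hge
      · rw [hyz n i hlt, abs_zero]; exact (hεs_pos n).le
      · exact hyd n i (h n hge)
  -- coordinatewise bound on finite sums
  have hcoord : ∀ (a : ℕ → ℝ) (C : ℝ), 0 ≤ C → ∀ (t : Finset ℕ), (∀ n ∈ t, |a n| ≤ C) →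
      ∀ i, |∑ n ∈ t, a n * y n i| ≤ C * (1 + ε) := by
    intro a C hC t ha i
    obtain ⟨n₀, hn₀⟩ := hblock i
    calc |∑ n ∈ t, a n * y n i| ≤ ∑ n ∈ t, |a n * y n i| := Finset.abs_sum_le_sum_abs _ _
    _ ≤ ∑ n ∈ t, ((if n = n₀ then C else 0) + C * εs n) := by
        refine Finset.sum_le_sum (fun n hn => ?_)
        rw [abs_mul]
        by_cases hnn : n = n₀
        · subst hnn
          have h1 : |y n i| ≤ 1 := by rw [← hy1 n]; exact STcoord_le (y n) i
          have h2 : 0 ≤ C * εs n := mul_nonneg hC (hεs_pos n).le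
          have := mul_le_mul (ha n hn) h1 (abs_nonneg _) hC
          simp only [eq_self_iff_true, if_true]
          nlinarith
        · have h1 : |y n i| ≤ εs n := hn₀ n hnn
          have := mul_le_mul (ha n hn) h1 (abs_nonneg _) hC
          simp only [if_neg hnn]
          nlinarith
    _ = (∑ n ∈ t, if n = n₀ then C else 0) + ∑ n ∈ t, C * εs n := Finset.sum_add_distrib
    _ ≤ C + C * ε := by
        refine add_le_add ?_ ?_
        · rw [Finset.sum_ite_eq' t n₀ (fun _ => C)]
          by_cases h : n₀ ∈ t <;> simp [h, hC]
        · rw [← Finset.mul_sum]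
          exact mul_le_mul_of_nonneg_left (hεfin t) hC
    _ = C * (1 + ε) := by ring
  -- coordinates of finite sums
  have hco : ∀ (t : Finset ℕ) (a : ℕ → ℝ) (i : ℕ),
      (∑ n ∈ t, a n • y n) i = ∑ n ∈ t, a n * y n i := by
    intro t a i
    rw [← STeval_apply, map_sum]
    exact Finset.sum_congr rfl (fun n _ => rfl)
  -- norm bound on finite sums
  have hfin : ∀ (a : ℕ → ℝ) (C : ℝ), 0 ≤ C → ∀ t : Finset ℕ, (∀ n ∈ t, |a n| ≤ C) →
      ‖∑ n ∈ t, a n • y n‖ ≤ C * (1 + ε) := by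
    intro a C hC t ha
    refine STnorm_le _ (by positivity) (fun i => ?_)
    rw [hco]
    exact hcoord a C hC t ha i
  -- summability of the series defining R
  have hsummable : ∀ z : STc0, Summable (fun n => z n • u n) := by
    intro z
    rw [summable_iff_vanishing_norm]
    intro γ hγ
    have hγ' : 0 < (d * γ) / (2 * (1 + ε)) := by positivity
    obtain ⟨N, hN⟩ := STdecay z hγ'
    refine ⟨Finset.range N, fun t ht => ?_⟩
    have hmem : (∑ n ∈ t, z n • u n) ∈ M := Submodule.sum_mem M (fun n _ => M.smul_mem _ (huM n))
    have hTsum : T (∑ n ∈ t, z n • u n) = ∑ n ∈ t, z n • y n := by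
      rw [map_sum]
      exact Finset.sum_congr rfl (fun n _ => by rw [map_smul])
    have hzb : ∀ n ∈ t, |z n| ≤ (d * γ) / (2 * (1 + ε)) := by
      intro n hn
      refine hN n ?_
      by_contra hlt
      push_neg at hlt
      exact (Finset.disjoint_left.mp ht) hn (Finset.mem_range.mpr hlt)
    have h1 := hdle _ hmem
    rw [hTsum] at h1
    have h2 := hfin z _ hγ'.le t hzb
    have : ‖∑ n ∈ t, z n • u n‖ ≤ γ / 2 := by
      have h3 : d * ‖∑ n ∈ t, z n • u n‖ ≤ (d * γ) / (2 * (1 + ε)) * (1 + ε) := le_trans h1 h2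
      have h4 : (d * γ) / (2 * (1 + ε)) * (1 + ε) = d * (γ / 2) := by field_simp
      rw [h4] at h3
      nlinarith
    nlinarith
  -- the map R
  have hRmem : ∀ z : STc0, (∑' n, z n • u n) ∈ M := by
    intro z
    have h1 := (hsummable z).hasSum.tendsto_sum_nat
    exact hMc.mem_of_tendsto h1 (Filter.Eventually.of_forall
      (fun k => Submodule.sum_mem M (fun n _ => M.smul_mem _ (huM n))))
  have hTR : ∀ z : STc0, HasSum (fun n => z n • y n) (T (∑' n, z n • u n)) := by
    intro z
    have h := (hsummable z).hasSum.mapL T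
    simpa only [map_smul] using h
  have hTRup : ∀ z : STc0, ‖T (∑' n, z n • u n)‖ ≤ (1 + ε) * ‖z‖ := by
    intro z
    have h1 : Tendsto (fun s : Finset ℕ => ‖∑ n ∈ s, z n • y n‖) atTop
        (𝓝 ‖T (∑' n, z n • u n)‖) := (hTR z).norm
    refine le_of_tendsto h1 (Filter.Eventually.of_forall (fun s => ?_))
    have := hfin z ‖z‖ (norm_nonneg z) s (fun n _ => STcoord_le z n)
    linarith [this]
  have hRup : ∀ z : STc0, ‖(∑' n, z n • u n)‖ ≤ (1 + ε) / d * ‖z‖ := by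
    intro z
    have h1 := hdle _ (hRmem z)
    have h2 := hTRup z
    rw [div_mul_eq_mul_div, le_div_iff₀ hd]
    nlinarith
  -- R as a continuous linear map
  let Rlin : STc0 →ₗ[ℝ] X :=
    { toFun := fun z => ∑' n, z n • u n
      map_add' := by
        intro z w
        show (∑' n, (z + w) n • u n) = (∑' n, z n • u n) + ∑' n, w n • u n
        have h1 : (fun n => (z + w) n • u n) = fun n => z n • u n + w n • u n := by
          funext n
          have : (z + w) n = z n + w n := rfl
          rw [this, add_smul]
        rw [h1, Summable.tsum_add (hsummable z) (hsummable w)]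
      map_smul' := by
        intro a z
        show (∑' n, (a • z) n • u n) = (RingHom.id ℝ) a • ∑' n, z n • u n
        have h1 : (fun n => (a • z) n • u n) = fun n => a • (z n • u n) := by
          funext n
          have : (a • z) n = a * z n := rfl
          rw [this, mul_smul]
        rw [h1, Summable.tsum_const_smul a (hsummable z)]
        rfl }
  let R : STc0 →L[ℝ] X := Rlin.mkContinuous ((1 + ε) / d) (fun z => hRup z)
  have hRapp : ∀ z, R z = ∑' n, z n • u n := fun z => rfl
  have hRnorm : ‖R‖ ≤ (1 + ε) / d :=
    Rlin.mkContinuous_norm_le (by positivity) (fun z => hRup z)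
  -- the lower estimate
  have hlow : ∀ z : STc0, (1 - 2*ε) * ‖z‖ ≤ ‖T (R z)‖ := by
    intro z
    have claim : ∀ n₀ : ℕ, |z n₀| - 2*ε*‖z‖ ≤ ‖T (R z)‖ := by
      intro n₀
      -- find a coordinate where y n₀ is big
      have hbig : ∃ i₀, 1 - εs n₀ < |y n₀ i₀| := by
        by_contra hcon
        push_neg at hcon
        have h1 : ‖y n₀‖ ≤ 1 - εs n₀ := STnorm_le _ (by nlinarith [hεs_le n₀]) hcon
        rw [hy1 n₀] at h1
        nlinarith [hεs_pos n₀]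
      obtain ⟨i₀, hi₀⟩ := hbig
      have hsmall : ∀ n, n ≠ n₀ → |y n i₀| ≤ εs n := by
        obtain ⟨n₁, hn₁⟩ := hblock i₀
        rcases eq_or_ne n₁ n₀ with h | h
        · subst h; exact hn₁
        · exfalso
          have := hn₁ n₀ (Ne.symm h)
          nlinarith [hεs_le n₀, hεs_pos n₀]
      -- evaluate the series at i₀
      have hev : HasSum (fun n => z n * y n i₀) ((T (R z)) i₀) := by
        have h := (hTR z).mapL (STeval i₀)
        have h2 : (fun n => STeval i₀ (z n • y n)) = fun n => z n * y n i₀ := by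
          funext n
          rfl
        rw [hRapp]
        rw [h2] at h
        exact h
      have hsum2 : Summable (fun n => z n * y n i₀) := hev.summable
      have heq : (T (R z)) i₀ = z n₀ * y n₀ i₀ + ∑' n, ite (n = n₀) 0 (z n * y n i₀) := by
        rw [← hev.tsum_eq, Summable.tsum_eq_add_tsum_ite hsum2 n₀]
      have hbnd : ∀ n, ‖ite (n = n₀) (0:ℝ) (z n * y n i₀)‖ ≤ ‖z‖ * εs n := by
        intro n
        by_cases h : n = n₀
        · rw [if_pos h, norm_zero]
          positivity
        · rw [if_neg h]
          rw [Real.norm_eq_abs, abs_mul]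
          exact mul_le_mul (STcoord_le z n) (hsmall n h) (abs_nonneg _) (norm_nonneg z)
      have hrest_sum : Summable (fun n => ‖ite (n = n₀) (0:ℝ) (z n * y n i₀)‖) :=
        Summable.of_nonneg_of_le (fun n => norm_nonneg _) hbnd (hεsSum.mul_left ‖z‖)
      have hrest : |∑' n, ite (n = n₀) (0:ℝ) (z n * y n i₀)| ≤ ‖z‖ * ε := by
        calc |∑' n, ite (n = n₀) (0:ℝ) (z n * y n i₀)|
            ≤ ∑' n, ‖ite (n = n₀) (0:ℝ) (z n * y n i₀)‖ := norm_tsum_le_tsum_norm hrest_sum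
        _ ≤ ∑' n, ‖z‖ * εs n := Summable.tsum_le_tsum hbnd hrest_sum (hεsSum.mul_left ‖z‖)
        _ = ‖z‖ * ε := by rw [tsum_mul_left, hεsTsum]
      have habs : |z n₀ * y n₀ i₀| ≤ |(T (R z)) i₀| + |∑' n, ite (n = n₀) 0 (z n * y n i₀)| := by
        have h1 := abs_add_le ((T (R z)) i₀) (-(∑' n, ite (n = n₀) (0:ℝ) (z n * y n i₀)))
        rw [abs_neg] at h1
        have h2 : (T (R z)) i₀ + -(∑' n, ite (n = n₀) (0:ℝ) (z n * y n i₀)) = z n₀ * y n₀ i₀ := by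
          rw [heq]; ring
        rw [h2] at h1
        exact h1
      have hcle : |(T (R z)) i₀| ≤ ‖T (R z)‖ := STcoord_le _ i₀
      have hzb : |z n₀| ≤ ‖z‖ := STcoord_le z n₀
      have hy0 : |y n₀ i₀| ≤ 1 := by rw [← hy1 n₀]; exact STcoord_le _ i₀
      rw [abs_mul] at habs
      nlinarith [hεs_le n₀, abs_nonneg (z n₀), norm_nonneg z, hεs_pos n₀]
    refine le_of_forall_pos_le_add (fun γ hγ => ?_)
    rcases le_or_gt ‖z‖ γ with h | h
    · nlinarith [norm_nonneg (T (R z)), norm_nonneg z]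
    · have hex : ∃ n₀, ‖z‖ - γ < |z n₀| := by
        by_contra hcon
        push_neg at hcon
        have := STnorm_le z (by linarith) hcon
        linarith
      obtain ⟨n₀, hn₀⟩ := hex
      have := claim n₀
      linarith
  -- conclusion
  have hc : (0:ℝ) < 1 - 2*ε := by linarith
  have hRpos : 0 < ‖R‖ := by
    by_contra hcon
    push_neg at hcon
    have h0 : ‖R‖ = 0 := le_antisymm hcon (norm_nonneg R)
    have h1 := hlow (STee 0)
    rw [STee_norm] at h1
    have h2 : ‖T (R (STee 0))‖ ≤ ‖T‖ * ‖R (STee 0)‖ := T.le_opNorm _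
    have h3 : ‖R (STee 0)‖ ≤ ‖R‖ * ‖STee 0‖ := R.le_opNorm _
    rw [STee_norm, h0] at h3
    nlinarith [norm_nonneg (T (R (STee 0))), norm_nonneg (R (STee 0)), norm_nonneg T]
  refine ⟨R, 1 - 2*ε, hc, fun z => hlow z, ?_⟩
  rw [div_le_div_iff₀ (by positivity) hRpos]
  have h4 : d * (1 - 2*ε) * ‖R‖ ≤ d * (1 - 2*ε) * ((1 + ε) / d) :=
    mul_le_mul_of_nonneg_left hRnorm (by positivity)
  have h5 : d * (1 - 2*ε) * ((1 + ε) / d) = (1 - 2*ε) * (1 + ε) := by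
    field_simp
  linarith [h4, h5.le, h5.ge]


theorem stmt2' {X : Type*} [NormedAddCommGroup X] [NormedSpace ℝ X] [CompleteSpace X]
    (T : X →L[ℝ] ZeroAtInftyContinuousMap ℕ ℝ) :
    sSup { r : ℝ | ∃ R : STc0 →L[ℝ] X, ∃ c : ℝ, 0 < c ∧ (∀ z, c * ‖z‖ ≤ ‖T (R z)‖) ∧
        r = c / ‖R‖ } =
    sSup { c : ℝ | ∃ M : Submodule ℝ X, IsClosed (M : Set X) ∧ ¬ FiniteDimensional ℝ M ∧
        c = sInf { r : ℝ | ∃ x ∈ M, ‖x‖ = 1 ∧ r = ‖T x‖ } } := by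
  classical
  set A := { r : ℝ | ∃ R : STc0 →L[ℝ] X, ∃ c : ℝ, 0 < c ∧ (∀ z, c * ‖z‖ ≤ ‖T (R z)‖) ∧
      r = c / ‖R‖ } with hAdef
  set B := { c : ℝ | ∃ M : Submodule ℝ X, IsClosed (M : Set X) ∧ ¬ FiniteDimensional ℝ M ∧
      c = sInf { r : ℝ | ∃ x ∈ M, ‖x‖ = 1 ∧ r = ‖T x‖ } } with hBdef
  -- positivity of norms of maps appearing in A
  have hR0 : ∀ (R : STc0 →L[ℝ] X) (c : ℝ), 0 < c → (∀ z, c * ‖z‖ ≤ ‖T (R z)‖) → 0 < ‖R‖ := by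
    intro R c hc hl
    rcases eq_or_lt_of_le (norm_nonneg R) with h0 | h0
    · exfalso
      have hRz : R = 0 := R.opNorm_zero_iff.mp h0.symm
      have h1 := hl (STee 0)
      rw [hRz, STee_norm, mul_one] at h1
      simp only [ContinuousLinearMap.zero_apply, map_zero, norm_zero] at h1
      linarith
    · exact h0
  have hAle : ∀ r ∈ A, r ≤ ‖T‖ := by
    rintro r ⟨R, c, hc, hl, rfl⟩
    have h0 := hR0 R c hc hl
    rw [div_le_iff₀ h0]
    have h1 := hl (STee 0)
    rw [STee_norm, mul_one] at h1
    calc c ≤ ‖T (R (STee 0))‖ := h1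
    _ ≤ ‖T‖ * ‖R (STee 0)‖ := T.le_opNorm _
    _ ≤ ‖T‖ * (‖R‖ * ‖STee 0‖) :=
        mul_le_mul_of_nonneg_left (R.le_opNorm _) (norm_nonneg (T : X →L[ℝ] STc0))
    _ = ‖T‖ * ‖R‖ := by rw [STee_norm, mul_one]
  have hApos : ∀ r ∈ A, 0 ≤ r := by
    rintro r ⟨R, c, hc, hl, rfl⟩
    positivity
  have hBddA : BddAbove A := ⟨‖T‖, hAle⟩
  have hBnonneg : ∀ b ∈ B, 0 ≤ b := by
    rintro b ⟨M, hMc, hMf, rfl⟩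
    refine Real.sInf_nonneg ?_
    rintro r ⟨x, hxM, hx1, rfl⟩
    exact norm_nonneg _
  have hBddB : BddAbove B := by
    refine ⟨‖T‖, ?_⟩
    rintro b ⟨M, hMc, hMf, rfl⟩
    obtain ⟨x, hxM, hx1⟩ := STexists_unit M hMf
    have h1 : sInf { r : ℝ | ∃ x ∈ M, ‖x‖ = 1 ∧ r = ‖T x‖ } ≤ ‖T x‖ := by
      refine csInf_le ⟨0, ?_⟩ ⟨x, hxM, hx1, rfl⟩
      rintro r ⟨w, hwM, hw1, rfl⟩
      exact norm_nonneg _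
    have h2 : ‖T x‖ ≤ ‖T‖ := by
      have := T.le_opNorm x
      rwa [hx1, mul_one] at this
    linarith
  apply le_antisymm
  · -- sSup A ≤ sSup B
    refine Real.sSup_le ?_ (Real.sSup_nonneg hBnonneg)
    rintro r ⟨R, c, hc, hl, rfl⟩
    have h0 := hR0 R c hc hl
    set Mr := LinearMap.range ((R : STc0 →L[ℝ] X) : STc0 →ₗ[ℝ] X) with hMrdef
    have hK : (0:ℝ) ≤ ‖T‖ / c := by positivity
    have hal : AntilipschitzWith ⟨‖T‖ / c, hK⟩ R := by
      refine ContinuousLinearMap.antilipschitz_of_bound R (fun z => ?_)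
      show ‖z‖ ≤ (‖T‖ / c) * ‖R z‖
      rw [div_mul_eq_mul_div, le_div_iff₀ hc]
      nlinarith [hl z, T.le_opNorm (R z), norm_nonneg z, norm_nonneg (R z)]
    have hclosed : IsClosed (Mr : Set X) := by
      have h1 := hal.isClosed_range R.uniformContinuous
      rw [hMrdef, LinearMap.coe_range]
      simpa using h1
    have hinj : Function.Injective R := hal.injective
    have hinfdim : ¬ FiniteDimensional ℝ Mr := by
      intro h
      apply STc0_infdim
      refine FiniteDimensional.of_injective
        (((R : STc0 →L[ℝ] X) : STc0 →ₗ[ℝ] X).rangeRestrict) ?_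
      intro a b hab
      apply hinj
      have := congrArg Subtype.val hab
      simpa using this
    have hmemB : sInf { r : ℝ | ∃ x ∈ Mr, ‖x‖ = 1 ∧ r = ‖T x‖ } ∈ B :=
      ⟨Mr, hclosed, hinfdim, rfl⟩
    have hle : c / ‖R‖ ≤ sInf { r : ℝ | ∃ x ∈ Mr, ‖x‖ = 1 ∧ r = ‖T x‖ } := by
      refine le_csInf ?_ ?_
      · obtain ⟨x, hxM, hx1⟩ := STexists_unit Mr hinfdim
        exact ⟨‖T x‖, x, hxM, hx1, rfl⟩
      · rintro b ⟨x, hxM, hx1, rfl⟩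
        obtain ⟨z, hz⟩ := LinearMap.mem_range.mp hxM
        have hz' : R z = x := hz
        have h1 := hl z
        rw [hz'] at h1
        have h2 : ‖R z‖ ≤ ‖R‖ * ‖z‖ := R.le_opNorm z
        rw [hz', hx1] at h2
        rw [div_le_iff₀ h0]
        nlinarith [norm_nonneg z, norm_nonneg (T x)]
    exact le_trans hle (le_csSup hBddB hmemB)
  · -- sSup B ≤ sSup A
    refine Real.sSup_le ?_ (Real.sSup_nonneg hApos)
    rintro b ⟨M, hMc, hMf, rfl⟩
    set dd := sInf { r : ℝ | ∃ x ∈ M, ‖x‖ = 1 ∧ r = ‖T x‖ } with hdddef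
    have hddB : ∀ x ∈ M, ‖x‖ = 1 → dd ≤ ‖T x‖ := by
      intro x hxM hx1
      refine csInf_le ⟨0, ?_⟩ ⟨x, hxM, hx1, rfl⟩
      rintro r ⟨w, hwM, hw1, rfl⟩
      exact norm_nonneg _
    have hdd0 : 0 ≤ dd := by
      refine Real.sInf_nonneg ?_
      rintro r ⟨x, hxM, hx1, rfl⟩
      exact norm_nonneg _
    rcases eq_or_lt_of_le hdd0 with h0 | hdd
    · rw [← h0]
      exact Real.sSup_nonneg hApos
    · have hdle : ∀ x ∈ M, dd * ‖x‖ ≤ ‖T x‖ := by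
        intro x hx
        rcases eq_or_ne x 0 with rfl | hx0
        · simp
        · have hnx : 0 < ‖x‖ := norm_pos_iff.mpr hx0
          have hu1 : ‖(‖x‖⁻¹ : ℝ) • x‖ = 1 := by
            rw [norm_smul, norm_inv, norm_norm, inv_mul_cancel₀ hnx.ne']
          have h1 := hddB _ (M.smul_mem ‖x‖⁻¹ hx) hu1
          have h2 : T ((‖x‖⁻¹ : ℝ) • x) = (‖x‖⁻¹ : ℝ) • T x := map_smul T _ x
          have h4 : ‖(‖x‖⁻¹ : ℝ) • T x‖ = ‖x‖⁻¹ * ‖T x‖ := by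
            have h5 : ‖(‖x‖⁻¹ : ℝ) • T x‖ = ‖(‖x‖⁻¹ : ℝ)‖ * ‖T x‖ := STnorm_smul _ _
            rw [h5, Real.norm_eq_abs, abs_of_pos (inv_pos.mpr hnx)]
          rw [h2, h4] at h1
          have h6 : ‖x‖⁻¹ * ‖x‖ = 1 := inv_mul_cancel₀ hnx.ne'
          nlinarith [mul_le_mul_of_nonneg_right h1 hnx.le, h6, norm_nonneg (T x), hnx]
      refine le_of_forall_pos_le_add (fun η hη => ?_)
      set ε := min (η / (4 * dd)) (1/8) with hεdef
      have hε0 : 0 < ε := lt_min (by positivity) (by norm_num)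
      have hε14 : ε < 1/4 := lt_of_le_of_lt (min_le_right _ _) (by norm_num)
      obtain ⟨R, c, hc, hl, hrge⟩ := STkey T M hMc hMf hdd hdle hε0 hε14
      have hmemA : c / ‖R‖ ∈ A := ⟨R, c, hc, hl, rfl⟩
      have h1 : c / ‖R‖ ≤ sSup A := le_csSup hBddA hmemA
      have h2 : dd * (1 - 2*ε) / (1 + ε) ≤ sSup A := le_trans hrge h1
      rcases le_or_gt dd (sSup A) with h | h
      · linarith
      · have hεd : ε ≤ η / (4 * dd) := min_le_left _ _
        have h4 : ε * (4 * dd) ≤ η := by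
          rw [← le_div_iff₀ (by positivity : (0:ℝ) < 4 * dd)]
          exact hεd
        have h5 : dd * (1 - 2*ε) ≤ sSup A * (1 + ε) := by
          rw [div_le_iff₀ (by positivity : (0:ℝ) < 1 + ε)] at h2
          exact h2
        have hA0 : 0 ≤ sSup A := Real.sSup_nonneg hApos
        nlinarith [hε0, hε14, h, h4, h5, hdd]

end STAux

end STProof

theorem stmt2 {X : Type*} [NormedAddCommGroup X] [NormedSpace ℝ X] [CompleteSpace X] (T : X →L[ℝ] ZeroAtInftyContinuousMap ℕ ℝ) :
    SSZ (ZeroAtInftyContinuousMap ℕ ℝ) T = SS T := stmt2' T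
end

section
/- For a bounded operator T: c₀ → X, χ(T*) ≤ 2·SS_{c₀}(T), where χ(T*) is the Hausdorff measure of noncompactness of T*(B_{X*}) and SS_{c₀}(T) = sup{ (‖R‖·‖(TR)^{-1}‖)^{-1} : R: c₀ → c₀ bounded such that TR is an isomorphism onto its range }. -/
open NormedSpace Metric Set Filter
open scoped ENNReal

namespace Stmt3Aux
open Filter Metric
noncomputable section
abbrev C0 := ZeroAtInftyContinuousMap ℕ ℝ

lemma c0_coord_le (f : C0) (j : ℕ) : |f j| ≤ ‖f‖ := by
  rw [← ZeroAtInftyContinuousMap.norm_toBCF_eq_norm]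
  exact f.toBCF.norm_coe_le_norm j

lemma c0_norm_le (f : C0) (M : ℝ) (h : 0 ≤ M) (hf : ∀ j, |f j| ≤ M) : ‖f‖ ≤ M := by
  rw [← ZeroAtInftyContinuousMap.norm_toBCF_eq_norm]
  exact BoundedContinuousFunction.norm_le h |>.mpr hf

/-- build element of C0 from a function tending to zero -/
def mkC0 (f : ℕ → ℝ) (h : Tendsto f atTop (nhds 0)) : C0 :=
  ⟨⟨f, continuous_of_discreteTopology⟩, by rwa [cocompact_eq_atTop]⟩

@[simp] lemma mkC0_apply (f : ℕ → ℝ) (h) (j : ℕ) : mkC0 f h j = f j := rfl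

/-- tail truncation -/
def Qfun (n : ℕ) (f : C0) : C0 :=
  mkC0 (fun j => if j < n then 0 else f j) <| by
    apply Tendsto.congr' _ (by have := f.zero_at_infty'; rwa [cocompact_eq_atTop] at this)
    filter_upwards [eventually_ge_atTop n] with j hj
    simp [Nat.not_lt.mpr hj]

@[simp] lemma Qfun_apply (n : ℕ) (f : C0) (j : ℕ) :
    Qfun n f j = if j < n then 0 else f j := rfl

lemma Qfun_coord_le (n : ℕ) (f : C0) (j : ℕ) : |Qfun n f j| ≤ |f j| := by
  rw [Qfun_apply]; split <;> simp [abs_nonneg]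

lemma Qfun_norm_le (n : ℕ) (f : C0) : ‖Qfun n f‖ ≤ ‖f‖ :=
  c0_norm_le _ _ (norm_nonneg f) fun j => (Qfun_coord_le n f j).trans (c0_coord_le f j)

def Q (n : ℕ) : C0 →L[ℝ] C0 := LinearMap.mkContinuous
  { toFun := Qfun n
    map_add' := by
      intro f g; ext j
      simp only [Qfun_apply, ZeroAtInftyContinuousMap.coe_add, Pi.add_apply]
      split <;> simp
    map_smul' := by
      intro c f; ext j
      simp only [Qfun_apply, ZeroAtInftyContinuousMap.coe_smul, Pi.smul_apply, RingHom.id_apply,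
        smul_eq_mul]
      split <;> simp }
  1 <| fun f => by simpa using Qfun_norm_le _ f

@[simp] lemma Q_apply (n : ℕ) (f : C0) (j : ℕ) : Q n f j = if j < n then 0 else f j := rfl

lemma Q_norm_le (n : ℕ) : ‖Q n‖ ≤ 1 := LinearMap.mkContinuous_norm_le _ zero_le_one _

/-- basis vector -/
def dl (i : ℕ) : C0 :=
  mkC0 (fun j => if j = i then 1 else 0) <| by
    apply Tendsto.congr' _ tendsto_const_nhds
    filter_upwards [eventually_ge_atTop (i+1)] with j hj
    simp [Nat.ne_of_gt hj]

@[simp] lemma dl_apply (i j : ℕ) : dl i j = if j = i then 1 else 0 := rfl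

lemma dl_norm : ∀ i, ‖dl i‖ = 1 := by
  intro i
  refine le_antisymm (c0_norm_le _ _ zero_le_one fun j => ?_) ?_
  · rw [dl_apply]; split <;> simp
  · have := c0_coord_le (dl i) i
    simpa using this

/-- evaluation functional -/
def ev (j : ℕ) : C0 →L[ℝ] ℝ := LinearMap.mkContinuous
  { toFun := fun f => f j
    map_add' := by intro f g; simp
    map_smul' := by intro c f; simp }
  1 <| fun f => by simpa using c0_coord_le f j

@[simp] lemma ev_apply (j : ℕ) (f : C0) : ev j f = f j := rfl

lemma sum_delta (n : ℕ) (x : C0) :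
    x - Q n x = ∑ i ∈ Finset.range n, x i • dl i := by
  ext j
  have hsum : (∑ i ∈ Finset.range n, x i • dl i) j
      = ∑ i ∈ Finset.range n, x i * (if j = i then 1 else 0) := by
    rw [← ev_apply j, map_sum]
    simp
  rw [ZeroAtInftyContinuousMap.coe_sub, Pi.sub_apply, hsum]
  have : ∀ i ∈ Finset.range n, x i * (if j = i then 1 else 0) = if j = i then x i else 0 := by
    intro i _; split <;> simp
  rw [Finset.sum_congr rfl this, Finset.sum_ite_eq]
  simp only [Finset.mem_range, Q_apply]
  split <;> simp

variable {X : Type*} [NormedAddCommGroup X] [NormedSpace ℝ X]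

lemma adjOp_apply (T : C0 →L[ℝ] X) (f : StrongDual ℝ X) (x : C0) : adjOp T f x = f (T x) := rfl

lemma chi_le (T : C0 →L[ℝ] X) (n : ℕ) {ε : ℝ} (hε : 0 < ε) :
    chiOp (adjOp T) ≤ ‖T.comp (Q n)‖ + ε := by
  classical
  set Φl : (Fin n → ℝ) →ₗ[ℝ] (StrongDual ℝ C0) :=
    { toFun := fun c => ∑ i : Fin n, c i • (ev (i : ℕ))
      map_add' := by intro a b; simp [add_smul, Finset.sum_add_distrib]
      map_smul' := by intro m a; simp [smul_smul, Finset.smul_sum]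
    } with hΦl
  have hΦc : Continuous Φl :=
    LinearMap.continuous_of_finiteDimensional (E := Fin n → ℝ) (F' := StrongDual ℝ C0) Φl
  have hcomp : IsCompact (Φl '' (closedBall 0 ‖T‖)) :=
    (isCompact_closedBall (0 : Fin n → ℝ) ‖T‖).image hΦc
  obtain ⟨t, htf, hcov⟩ := ((Metric.totallyBounded_iff (α := StrongDual ℝ C0)).mp
    (IsCompact.totallyBounded (α := StrongDual ℝ C0) hcomp)) ε hε
  have hmain : ∀ f : StrongDual ℝ X, ‖f‖ ≤ 1 →
      ∃ y ∈ htf.toFinset, dist (adjOp T f) y ≤ ‖T.comp (Q n)‖ + ε := by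
    intro f hf
    set c : Fin n → ℝ := fun i => f (T (dl (i : ℕ))) with hc
    have hcball : c ∈ closedBall (0 : Fin n → ℝ) ‖T‖ := by
      rw [mem_closedBall_zero_iff]
      refine pi_norm_le_iff_of_nonneg (norm_nonneg T) |>.mpr fun i => ?_
      calc ‖c i‖ ≤ ‖f‖ * ‖T (dl (i : ℕ))‖ := f.le_opNorm _
        _ ≤ 1 * (‖T‖ * ‖dl (i : ℕ)‖) :=
          mul_le_mul hf (T.le_opNorm _) (norm_nonneg _) zero_le_one
        _ = ‖T‖ := by rw [dl_norm]; ring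
    obtain ⟨y, hyt, hy⟩ : ∃ y ∈ t, Φl c ∈ ball y ε := by
      have := hcov (Set.mem_image_of_mem _ hcball)
      simpa using this
    refine ⟨y, htf.mem_toFinset.mpr hyt, ?_⟩
    have hkey : adjOp T f - Φl c = adjOp (T.comp (Q n)) f := by
      ext x
      have hx := sum_delta n x
      have hfx : f (T x) = f (T (Q n x)) + ∑ i ∈ Finset.range n, x i * f (T (dl i)) := by
        have h1 : f (T x) - f (T (Q n x)) = f (T (x - Q n x)) := by
          rw [map_sub, map_sub]
        have h2 : f (T (x - Q n x)) = ∑ i ∈ Finset.range n, x i * f (T (dl i)) := by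
          rw [hx, map_sum, map_sum]
          simp [map_smul, smul_eq_mul]
        linarith
      have hΦx : Φl c x = ∑ i ∈ Finset.range n, x i * f (T (dl i)) := by
        simp only [hΦl, LinearMap.coe_mk, AddHom.coe_mk]
        rw [ContinuousLinearMap.sum_apply, Finset.sum_range]
        simp [hc, mul_comm]
      simp only [ContinuousLinearMap.coe_sub', Pi.sub_apply, adjOp_apply]
      rw [hfx, hΦx]
      simp [adjOp_apply]
    have hnorm : ‖adjOp (T.comp (Q n)) f‖ ≤ ‖T.comp (Q n)‖ := by
      refine ContinuousLinearMap.opNorm_le_bound _ (norm_nonneg (T.comp (Q n))) fun x => ?_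
      calc ‖adjOp (T.comp (Q n)) f x‖ = ‖f ((T.comp (Q n)) x)‖ := rfl
        _ ≤ ‖f‖ * ‖(T.comp (Q n)) x‖ := f.le_opNorm _
        _ ≤ 1 * (‖T.comp (Q n)‖ * ‖x‖) :=
          mul_le_mul hf ((T.comp (Q n)).le_opNorm x) (norm_nonneg _) zero_le_one
        _ = ‖T.comp (Q n)‖ * ‖x‖ := by ring
    calc dist (adjOp T f) y ≤ dist (adjOp T f) (Φl c) + dist (Φl c) y := dist_triangle _ _ _
      _ ≤ ‖T.comp (Q n)‖ + ε := by
        refine add_le_add ?_ (le_of_lt (mem_ball.mp hy))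
        rw [dist_eq_norm, hkey]
        exact hnorm
  refine csInf_le ⟨0, fun r hr => ?_⟩ ?_
  · obtain ⟨F, hF⟩ := hr
    obtain ⟨y, _, hy⟩ := hF (adjOp T 0)
      (Set.mem_image_of_mem _ (mem_closedBall_self zero_le_one))
    exact le_trans dist_nonneg hy
  · exact ⟨htf.toFinset, fun a ⟨f, hf, hfa⟩ => hfa ▸ hmain f (by
      simpa [mem_closedBall_zero_iff] using hf)⟩

lemma step_lemma (T : C0 →L[ℝ] X) {t ε : ℝ} (ht : ∀ k, t ≤ ‖T.comp (Q k)‖) (hε : 0 < ε)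
    (n : ℕ) :
    ∃ m : ℕ, ∃ u : C0, n < m ∧ (∀ j, j < n → u j = 0) ∧ (∀ j, m ≤ j → u j = 0) ∧
      ‖u‖ ≤ 1 ∧ t - ε ≤ ‖T u‖ := by
  have h1 : t - ε/2 < ‖T.comp (Q n)‖ := lt_of_lt_of_le (by linarith) (ht n)
  obtain ⟨x, hx1, hx2⟩ := (T.comp (Q n)).exists_lt_apply_of_lt_opNorm h1
  set y := Q n x with hy
  have hy1 : ‖y‖ ≤ 1 := by
    refine le_trans (c0_norm_le y ‖x‖ (norm_nonneg x) fun j => ?_) hx1.le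
    rw [hy, Q_apply]
    split
    · simpa using norm_nonneg x
    · exact c0_coord_le x j
  have hylow : ∀ j, j < n → y j = 0 := by
    intro j hj; rw [hy, Q_apply, if_pos hj]
  have hTy : t - ε/2 < ‖T y‖ := hx2
  set δ := ε / (2*(‖T‖+1)) with hδdef
  have hδ : 0 < δ := by positivity
  have hyt : Tendsto (fun j => y j) atTop (nhds 0) := by
    have h := y.zero_at_infty'; rwa [cocompact_eq_atTop] at h
  obtain ⟨m₀, hm₀⟩ := Metric.tendsto_atTop.mp hyt δ hδ
  set m := max m₀ (n+1) with hm
  refine ⟨m, y - Q m y, lt_of_lt_of_le (Nat.lt_succ_self n) (le_max_right _ _), ?_, ?_, ?_, ?_⟩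
  · intro j hj
    have hjm : j < m := lt_of_lt_of_le (lt_of_lt_of_le hj (Nat.le_succ n)) (le_max_right _ _)
    rw [ZeroAtInftyContinuousMap.coe_sub, Pi.sub_apply, Q_apply m y, if_pos hjm, hylow j hj,
      sub_zero]
  · intro j hj
    rw [ZeroAtInftyContinuousMap.coe_sub, Pi.sub_apply, Q_apply m y, if_neg (not_lt.mpr hj),
      sub_self]
  · refine c0_norm_le _ _ zero_le_one fun j => ?_
    rw [ZeroAtInftyContinuousMap.coe_sub, Pi.sub_apply, Q_apply m y]
    split
    · rw [sub_zero]; exact le_trans (c0_coord_le y j) hy1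
    · rw [sub_self]; simpa using zero_le_one
  · have hq : ‖Q m y‖ ≤ δ := by
      refine c0_norm_le _ _ hδ.le fun j => ?_
      rw [Q_apply m y]
      split
      · simpa using hδ.le
      · have hjm : m₀ ≤ j := le_trans (le_max_left _ _) (not_lt.mp (by assumption))
        have h2' := hm₀ j hjm
        rw [Real.dist_eq, sub_zero] at h2'
        exact h2'.le
    have hTq : ‖T (Q m y)‖ ≤ ‖T‖ * δ :=
      le_trans (T.le_opNorm _) (mul_le_mul_of_nonneg_left hq (norm_nonneg T))
    have hTδ : ‖T‖ * δ ≤ ε / 2 := by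
      have h0 : (0:ℝ) < ‖T‖ + 1 := by positivity
      have heq : (‖T‖+1) * δ = ε/2 := by
        rw [hδdef]; field_simp
      nlinarith [hδ.le]
    have hsub : ‖T y‖ - ‖T (Q m y)‖ ≤ ‖T (y - Q m y)‖ := by
      rw [map_sub]; exact norm_sub_norm_le _ _
    linarith

set_option maxHeartbeats 2000000 in
lemma ssz_ge (T : C0 →L[ℝ] X) {t ε : ℝ} (ht : ∀ k, t ≤ ‖T.comp (Q k)‖) (hε : 0 < ε)
    (htε : 3*ε < t) {n₀ : ℕ} (hn₀ : ‖T.comp (Q n₀)‖ ≤ t + ε) :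
    t - 3*ε ≤ SSZ C0 T := by
  classical
  choose m u hmn h0 h1 hun hTu using step_lemma T ht hε
  set N : ℕ → ℕ := fun k => Nat.rec n₀ (fun _ Nk => m Nk) k with hN
  have hN0 : N 0 = n₀ := rfl
  have hNs : ∀ k, N (k+1) = m (N k) := fun k => rfl
  set v : ℕ → C0 := fun k => u (N k) with hv
  have hNmono : StrictMono N := strictMono_nat_of_lt_succ fun k => by
    rw [hNs]; exact hmn (N k)
  have hvlow : ∀ k j, j < N k → v k j = 0 := fun k j hj => h0 (N k) j hj
  have hvhigh : ∀ k j, N (k+1) ≤ j → v k j = 0 := fun k j hj =>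
    h1 (N k) j (by rwa [hNs] at hj)
  have hvn : ∀ k, ‖v k‖ ≤ 1 := fun k => hun (N k)
  have hvT : ∀ k, t - ε ≤ ‖T (v k)‖ := fun k => hTu (N k)
  set g : ℕ → ℕ := fun j => Nat.findGreatest (fun k => N k ≤ j) j with hg
  have hg_ge : ∀ k j, N k ≤ j → k ≤ g j := fun k j h =>
    Nat.le_findGreatest (le_trans hNmono.le_apply h) h
  have hg_spec : ∀ k j, N k ≤ j → j < N (k+1) → g j = k := by
    intro k j hj1 hj2
    refine le_antisymm ?_ (hg_ge k j hj1)
    by_contra hlt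
    push_neg at hlt
    have h2 : N (k+1) ≤ N (g j) := hNmono.monotone hlt
    have hP : N (g j) ≤ j :=
      Nat.findGreatest_spec (P := fun k => N k ≤ j) (le_trans hNmono.le_apply hj1) hj1
    omega
  have hg0 : ∀ j, j < N 0 → g j = 0 := by
    intro j hj
    refine Nat.findGreatest_eq_zero_iff.mpr fun k hkpos hkle hNk => ?_
    have := hNmono.monotone (Nat.zero_le k)
    omega
  have hgv : ∀ k j, g j ≠ k → v k j = 0 := by
    intro k j hne
    rcases lt_or_ge j (N k) with h | h
    · exact hvlow k j h
    rcases lt_or_ge j (N (k+1)) with h2 | h2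
    · exact absurd (hg_spec k j h h2) hne
    · exact hvhigh k j h2
  have hgtop : Tendsto g atTop atTop :=
    tendsto_atTop_atTop.mpr fun b => ⟨N b, fun j hj => hg_ge b j hj⟩
  have hcoordle : ∀ (a : C0) (j : ℕ), |a (g j) * v (g j) j| ≤ |a (g j)| := by
    intro a j
    rw [abs_mul]
    calc |a (g j)| * |v (g j) j| ≤ |a (g j)| * 1 := by
          refine mul_le_mul_of_nonneg_left ?_ (abs_nonneg _)
          exact le_trans (c0_coord_le _ j) (hvn (g j))
      _ = |a (g j)| := mul_one _
  have hRtend : ∀ a : C0, Tendsto (fun j => a (g j) * v (g j) j) atTop (nhds 0) := by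
    intro a
    have ha : Tendsto (fun j => a (g j)) atTop (nhds 0) := by
      have h := a.zero_at_infty'; rw [cocompact_eq_atTop] at h
      exact h.comp hgtop
    exact squeeze_zero_norm (fun j => hcoordle a j) (by simpa using ha.norm)
  set R : C0 →L[ℝ] C0 := LinearMap.mkContinuous
    { toFun := fun a => mkC0 (fun j => a (g j) * v (g j) j) (hRtend a)
      map_add' := by intro a b; ext j; simp [add_mul]
      map_smul' := by intro c a; ext j; simp [mul_assoc] }
    1 (fun a => by
      rw [one_mul]
      refine c0_norm_le _ _ (norm_nonneg a) fun j => ?_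
      exact le_trans (hcoordle a j) (c0_coord_le a (g j))) with hR
  have hRa : ∀ (a : C0) (j : ℕ), R a j = a (g j) * v (g j) j := fun a j => rfl
  have hRnorm : ‖R‖ ≤ 1 := LinearMap.mkContinuous_norm_le _ zero_le_one _
  have hRle : ∀ a : C0, ‖R a‖ ≤ ‖a‖ := fun a =>
    le_trans (R.le_opNorm a) (by
      calc ‖R‖ * ‖a‖ ≤ 1 * ‖a‖ := mul_le_mul_of_nonneg_right hRnorm (norm_nonneg a)
        _ = ‖a‖ := one_mul _)
  have hRdl : ∀ k, R (dl k) = v k := by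
    intro k; ext j
    rw [hRa]
    by_cases h : g j = k
    · rw [h, dl_apply, if_pos rfl, one_mul]
    · rw [dl_apply, if_neg h, zero_mul, hgv k j h]
  have hRtail : ∀ a : C0, Q (N 0) (R a) = R a := by
    intro a; ext j
    rw [Q_apply]
    split
    · rw [hRa, hg0 j (by assumption), hvlow 0 j (by assumption), mul_zero]
    · rfl
  have htεpos : 0 < t - ε := by linarith
  have hmain : ∀ a : C0, (t - 3*ε) * ‖a‖ ≤ ‖T (R a)‖ := by
    intro a
    have key : ∀ η : ℝ, 0 < η → (t - 3*ε) * ‖a‖ ≤ ‖T (R a)‖ + 2*(t - ε)*η := by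
      intro η hη
      rcases le_or_gt ‖a‖ η with hsmall | hbig
      · nlinarith [norm_nonneg (T (R a)), norm_nonneg a]
      · obtain ⟨k₀, hk₀⟩ : ∃ k, ‖a‖ - η ≤ |a k| := by
          by_contra hcon
          push_neg at hcon
          have : ‖a‖ ≤ ‖a‖ - η := c0_norm_le a _ (by linarith) fun j => (hcon j).le
          linarith
        set b := a - (2 * a k₀) • dl k₀ with hb
        have hbnorm : ‖b‖ ≤ ‖a‖ := by
          refine c0_norm_le _ _ (norm_nonneg a) fun j => ?_
          rw [hb, ZeroAtInftyContinuousMap.coe_sub, Pi.sub_apply,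
            ZeroAtInftyContinuousMap.coe_smul, Pi.smul_apply, smul_eq_mul, dl_apply]
          by_cases hj : j = k₀
          · rw [if_pos hj, hj]
            have : a k₀ - 2 * a k₀ * 1 = -(a k₀) := by ring
            rw [this, abs_neg]
            exact c0_coord_le a k₀
          · rw [if_neg hj, mul_zero, sub_zero]
            exact c0_coord_le a j
        have hdiff : R a - R b = (2 * a k₀) • v k₀ := by
          have hab : a - b = (2 * a k₀) • dl k₀ := by rw [hb]; abel
          rw [← hRdl k₀, ← map_smul, ← map_sub, hab]
        have hTb : ‖T (R b)‖ ≤ (t + ε) * ‖a‖ := by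
          have h1 : T (R b) = (T.comp (Q (N 0))) (R b) := by
            rw [ContinuousLinearMap.comp_apply, hRtail]
          rw [h1]
          calc ‖(T.comp (Q (N 0))) (R b)‖ ≤ ‖T.comp (Q (N 0))‖ * ‖R b‖ :=
              (T.comp (Q (N 0))).le_opNorm _
            _ ≤ (t + ε) * ‖a‖ := by
              refine mul_le_mul (hN0 ▸ hn₀) (le_trans (hRle b) hbnorm) (norm_nonneg _) ?_
              linarith
        have hid : ‖T (R a) - T (R b)‖ = 2 * |a k₀| * ‖T (v k₀)‖ := by
          rw [← map_sub, hdiff, map_smul, norm_smul, Real.norm_eq_abs, abs_mul, abs_two]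
          try ring
        have h3 : 2 * |a k₀| * ‖T (v k₀)‖ ≤ ‖T (R a)‖ + ‖T (R b)‖ := by
          rw [← hid]; exact norm_sub_le _ _
        have h4 : 2*(‖a‖ - η)*(t - ε) ≤ 2 * |a k₀| * ‖T (v k₀)‖ := by
          have hTvk := hvT k₀
          nlinarith [abs_nonneg (a k₀), hk₀]
        nlinarith [h3, h4, hTb]
    refine le_of_forall_pos_le_add fun ρ hρ => ?_
    have hkey := key (ρ / (2*(t-ε))) (div_pos hρ (by linarith))
    have heq : 2*(t-ε)*(ρ/(2*(t-ε))) = ρ := by field_simp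
    linarith [hkey, heq.le, heq.ge]
  have hc : 0 < t - 3*ε := by linarith
  have hdl0 : ‖dl 0‖ = 1 := dl_norm 0
  have hRpos : 0 < ‖R‖ := by
    by_contra hcon
    push_neg at hcon
    have h0' : ‖R‖ = 0 := le_antisymm hcon (norm_nonneg R)
    have hz : R (dl 0) = 0 := by
      have := R.le_opNorm (dl 0)
      rw [h0', zero_mul] at this
      exact norm_le_zero_iff.mp this
    have hm' := hmain (dl 0)
    rw [hz, map_zero, norm_zero, hdl0, mul_one] at hm'
    linarith
  have hbdd : BddAbove {r : ℝ | ∃ R' : C0 →L[ℝ] C0, ∃ c : ℝ, 0 < c ∧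
      (∀ z, c * ‖z‖ ≤ ‖T (R' z)‖) ∧ r = c / ‖R'‖} := by
    refine ⟨‖T‖, fun r hr => ?_⟩
    obtain ⟨R', c', hc', hb', rfl⟩ := hr
    have h1 : c' ≤ ‖T‖ * ‖R'‖ := by
      have h2 := hb' (dl 0)
      rw [hdl0, mul_one] at h2
      calc c' ≤ ‖T (R' (dl 0))‖ := h2
        _ ≤ ‖T‖ * ‖R' (dl 0)‖ := T.le_opNorm _
        _ ≤ ‖T‖ * (‖R'‖ * ‖dl 0‖) :=
          mul_le_mul_of_nonneg_left (R'.le_opNorm _) (norm_nonneg T)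
        _ = ‖T‖ * ‖R'‖ := by rw [hdl0, mul_one]
    rcases eq_or_lt_of_le (norm_nonneg R') with hR0 | hR0
    · rw [← hR0, div_zero]
      exact norm_nonneg T
    · rw [div_le_iff₀ hR0]
      exact h1
  have hmem : (t - 3*ε) / ‖R‖ ∈ {r : ℝ | ∃ R' : C0 →L[ℝ] C0, ∃ c : ℝ, 0 < c ∧
      (∀ z, c * ‖z‖ ≤ ‖T (R' z)‖) ∧ r = c / ‖R'‖} :=
    ⟨R, t - 3*ε, hc, hmain, rfl⟩
  have hge : t - 3*ε ≤ (t - 3*ε) / ‖R‖ := by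
    rw [le_div_iff₀ hRpos]
    nlinarith [hRnorm, hc]
  exact le_trans hge (le_csSup hbdd hmem)

lemma chi_final (T : C0 →L[ℝ] X) : chiOp (adjOp T) ≤ 2 * SSZ C0 T := by
  set t := ⨅ n : ℕ, ‖T.comp (Q n)‖ with htdef
  have hbdd : BddBelow (Set.range fun n : ℕ => ‖T.comp (Q n)‖) := by
    refine ⟨0, ?_⟩
    rintro r ⟨n, rfl⟩
    exact ContinuousLinearMap.opNorm_nonneg _
  have htle : ∀ n, t ≤ ‖T.comp (Q n)‖ := fun n => ciInf_le hbdd n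
  have ht0 : 0 ≤ t := le_ciInf fun n => norm_nonneg (T.comp (Q n))
  have hchit : chiOp (adjOp T) ≤ t := by
    refine le_of_forall_pos_le_add fun ε hε => ?_
    obtain ⟨n, hn⟩ := exists_lt_of_ciInf_lt (show t < t + ε/2 by linarith)
    calc chiOp (adjOp T) ≤ ‖T.comp (Q n)‖ + ε/2 := chi_le T n (by linarith)
      _ ≤ t + ε := by linarith
  have hSSZ0 : 0 ≤ SSZ C0 T := by
    rcases Set.eq_empty_or_nonempty {r : ℝ | ∃ R' : C0 →L[ℝ] C0, ∃ c : ℝ, 0 < c ∧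
        (∀ z, c * ‖z‖ ≤ ‖T (R' z)‖) ∧ r = c / ‖R'‖} with he | hne
    · have hrw : SSZ C0 T = sSup {r : ℝ | ∃ R' : C0 →L[ℝ] C0, ∃ c : ℝ, 0 < c ∧
          (∀ z, c * ‖z‖ ≤ ‖T (R' z)‖) ∧ r = c / ‖R'‖} := rfl
      rw [hrw, he, Real.sSup_empty]
    · obtain ⟨r, hr⟩ := hne
      obtain ⟨R', c', hc', hb', hreq⟩ := hr
      have hbd : BddAbove {r : ℝ | ∃ R' : C0 →L[ℝ] C0, ∃ c : ℝ, 0 < c ∧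
          (∀ z, c * ‖z‖ ≤ ‖T (R' z)‖) ∧ r = c / ‖R'‖} := by
        refine ⟨‖T‖, fun r' hr' => ?_⟩
        obtain ⟨R'', c'', hc'', hb'', rfl⟩ := hr'
        have h2 := hb'' (dl 0)
        rw [dl_norm 0, mul_one] at h2
        have h1 : c'' ≤ ‖T‖ * ‖R''‖ := by
          calc c'' ≤ ‖T (R'' (dl 0))‖ := h2
            _ ≤ ‖T‖ * ‖R'' (dl 0)‖ := T.le_opNorm _
            _ ≤ ‖T‖ * (‖R''‖ * ‖dl 0‖) :=
              mul_le_mul_of_nonneg_left (R''.le_opNorm _) (norm_nonneg T)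
            _ = ‖T‖ * ‖R''‖ := by rw [dl_norm 0, mul_one]
        rcases eq_or_lt_of_le (norm_nonneg R'') with hR0 | hR0
        · rw [← hR0, div_zero]; exact norm_nonneg T
        · rw [div_le_iff₀ hR0]; exact h1
      have : (0:ℝ) ≤ r := by
        rw [hreq]
        exact div_nonneg hc'.le (ContinuousLinearMap.opNorm_nonneg _)
      exact le_trans this (le_csSup hbd ⟨R', c', hc', hb', hreq⟩)
  rcases le_or_gt t 0 with hneg | hpos
  · calc chiOp (adjOp T) ≤ t := hchit
      _ ≤ 0 := hneg
      _ ≤ 2 * SSZ C0 T := by linarith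
  · have htSSZ : t ≤ SSZ C0 T := by
      refine le_of_forall_pos_le_add fun ρ hρ => ?_
      set ε := min (ρ/3) (t/4) with hε
      have hε0 : 0 < ε := lt_min (by linarith) (by linarith)
      have hε1 : 3*ε < t := by
        have : ε ≤ t/4 := min_le_right _ _
        linarith
      obtain ⟨n₀, hn₀⟩ := exists_lt_of_ciInf_lt (show t < t + ε by linarith)
      have hssz := ssz_ge T htle hε0 hε1 hn₀.le
      have : 3*ε ≤ ρ := by
        have : ε ≤ ρ/3 := min_le_left _ _
        linarith
      linarith
    calc chiOp (adjOp T) ≤ t := hchit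
      _ ≤ SSZ C0 T := htSSZ
      _ ≤ 2 * SSZ C0 T := by linarith

end
end Stmt3Aux

open Stmt3Aux in
theorem stmt3 {X : Type*} [NormedAddCommGroup X] [NormedSpace ℝ X] [CompleteSpace X] (T : ZeroAtInftyContinuousMap ℕ ℝ →L[ℝ] X) :
    chiOp (adjOp T) ≤ 2 * SSZ (ZeroAtInftyContinuousMap ℕ ℝ) T :=
  Stmt3Aux.chi_final T
end

section
/- Let X be a Banach space and (x_n) a sequence in B_X that converges weakly to 0, with ‖x_n‖ > ε for all n. Then for every δ > 0 there is a subsequence (x_{k_n}) with ‖x_{k_n} − x_{k_m}‖ ≥ ε − δ for all n ≠ m. -/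
open NormedSpace Metric Set Filter
open scoped ENNReal

theorem stmt4 {X : Type*} [NormedAddCommGroup X] [NormedSpace ℝ X] [CompleteSpace X] (ε : ℝ) (hε : 0 < ε) (x : ℕ → X)
    (hball : ∀ n, ‖x n‖ ≤ 1)
    (hweak : ∀ f : StrongDual ℝ X, Tendsto (fun n => f (x n)) atTop (nhds 0))
    (hnorm : ∀ n, ε < ‖x n‖) :
    ∀ δ > (0 : ℝ), ∃ k : ℕ → ℕ, StrictMono k ∧
      ∀ m n : ℕ, m ≠ n → ε - δ ≤ ‖x (k n) - x (k m)‖ := by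
  intro δ hδ
  -- pick norming functionals
  have hx0 : ∀ n, x n ≠ 0 := fun n h => by
    have := hnorm n; rw [h, norm_zero] at this; linarith
  choose f hf1 hf2 using fun n => exists_dual_vector ℝ (x n) (norm_ne_zero_iff.mpr (hx0 n))
  -- key step
  have key : ∀ N : ℕ, ∃ M : ℕ, N < M ∧ ∀ j ≤ N, |f j (x M)| < δ := by
    intro N
    have h1 : ∀ᶠ m in atTop, ∀ j ∈ Finset.range (N + 1), |f j (x m)| < δ := by
      rw [eventually_all_finset]
      intro j _
      have := (hweak (f j)).eventually (Metric.ball_mem_nhds (0 : ℝ) hδ)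
      filter_upwards [this] with m hm
      simpa [Real.dist_eq] using hm
    obtain ⟨M, hM1, hM2⟩ := (h1.and (eventually_gt_atTop N)).exists
    exact ⟨M, hM2, fun j hj => hM1 j (Finset.mem_range.2 (Nat.lt_succ_of_le hj))⟩
  choose g hg1 hg2 using key
  set k : ℕ → ℕ := fun n => Nat.rec 0 (fun _ prev => g prev) n with hk
  have hksucc : ∀ n, k (n + 1) = g (k n) := fun n => rfl
  have hmono : StrictMono k := strictMono_nat_of_lt_succ fun n => by
    rw [hksucc]; exact hg1 (k n)
  refine ⟨k, hmono, ?_⟩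
  -- main estimate for m < n
  have main : ∀ m n : ℕ, m < n → ε - δ ≤ ‖x (k n) - x (k m)‖ := by
    intro m n hmn
    obtain ⟨p, rfl⟩ : ∃ p, n = p + 1 := ⟨n - 1, by omega⟩
    have hmp : k m ≤ k p := hmono.monotone (Nat.lt_succ_iff.1 hmn)
    have hsmall : |f (k m) (x (k (p + 1)))| < δ := by
      rw [hksucc]; exact hg2 (k p) (k m) hmp
    have hval : f (k m) (x (k m)) = ‖x (k m)‖ := by
      simpa using hf2 (k m)
    have hbound : |f (k m) (x (k m)) - f (k m) (x (k (p + 1)))| ≤ ‖x (k (p + 1)) - x (k m)‖ := by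
      have := (f (k m)).le_opNorm (x (k m) - x (k (p + 1)))
      rw [hf1 (k m), one_mul, map_sub] at this
      calc |f (k m) (x (k m)) - f (k m) (x (k (p + 1)))|
          = ‖f (k m) (x (k m)) - f (k m) (x (k (p + 1)))‖ := rfl
        _ ≤ ‖x (k m) - x (k (p + 1))‖ := this
        _ = ‖x (k (p + 1)) - x (k m)‖ := norm_sub_rev _ _
    have h3 : ε - δ ≤ |f (k m) (x (k m)) - f (k m) (x (k (p + 1)))| := by
      have h4 : ε < f (k m) (x (k m)) := by rw [hval]; exact hnorm (k m)
      have := abs_sub_abs_le_abs_sub (f (k m) (x (k m))) (f (k m) (x (k (p + 1))))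
      have h5 : |f (k m) (x (k m))| = f (k m) (x (k m)) := abs_of_pos (lt_trans hε h4)
      linarith [this, h5, hsmall, abs_nonneg (f (k m) (x (k (p + 1))))]
    linarith [hbound, h3]
  intro m n hmn
  rcases lt_or_gt_of_ne hmn with h | h
  · exact main m n h
  · rw [norm_sub_rev]; exact main n m h
end

section
/- For any bounded operator T: X → Y between Banach spaces, SCS(T) ≤ 2χ(T*), where SCS(T) = sup{ δ(Q_N T) : N infinite-codimensional closed subspace of Y with Q_N T surjective } and δ(S) = sup{δ > 0 : δ·B_{Y/N} ⊆ S(B_X)} for a surjective operator S. -/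
open NormedSpace Metric Set Filter
open scoped ENNReal

lemma dual_infDim {W : Type*} [NormedAddCommGroup W] [NormedSpace ℝ W]
    (h : ¬ FiniteDimensional ℝ W) : ¬ FiniteDimensional ℝ (StrongDual ℝ W) := by
  intro hfd
  haveI := hfd
  exact h (FiniteDimensional.of_injective
    (NormedSpace.inclusionInDoubleDualLi ℝ (E := W)).toLinearMap
    (NormedSpace.inclusionInDoubleDualLi ℝ (E := W)).injective)

set_option maxHeartbeats 1000000 in
lemma core_lemma {X Y : Type*} [NormedAddCommGroup X] [NormedSpace ℝ X]
    [NormedAddCommGroup Y] [NormedSpace ℝ Y] (T : X →L[ℝ] Y) (N : Submodule ℝ Y)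
    (hNc : IsClosed (N : Set Y)) (hinf : ¬ FiniteDimensional ℝ (Y ⧸ N)) {d : ℝ} (hd : 0 < d)
    (hsur : ∀ w : Y ⧸ N, ‖w‖ ≤ d →
      ∃ x : X, ‖x‖ ≤ 1 ∧ (Submodule.Quotient.mk (T x) : Y ⧸ N) = w) :
    d ≤ 2 * chiOp (adjOp T) := by
  classical
  haveI : IsClosed (N : Set Y) := hNc
  -- the quotient map as a continuous linear map
  set Q : Y →L[ℝ] (Y ⧸ N) :=
    LinearMap.mkContinuous N.mkQ 1
      (fun y => by simpa using Submodule.Quotient.norm_mk_le (S := N) y) with hQ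
  have hQnorm : ‖Q‖ ≤ 1 := LinearMap.mkContinuous_norm_le _ zero_le_one _
  have hQapp : ∀ y : Y, Q y = Submodule.Quotient.mk y := fun y => rfl
  -- key lower bound
  have key : ∀ g : StrongDual ℝ (Y ⧸ N), d * ‖g‖ ≤ ‖adjOp T (g.comp Q)‖ := by
    intro g
    set a := adjOp T (g.comp Q) with ha
    have haapp : ∀ x : X, a x = g (Submodule.Quotient.mk (T x)) := fun x => rfl
    have h1 : ‖g‖ ≤ ‖a‖ / d := by
      apply ContinuousLinearMap.opNorm_le_bound g (div_nonneg (norm_nonneg _) hd.le)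
      intro w
      rcases eq_or_lt_of_le (norm_nonneg w) with hw | hw
      · have : ‖g w‖ ≤ ‖g‖ * ‖w‖ := g.le_opNorm w
        rw [← hw] at this ⊢
        simpa using this
      · set c : ℝ := d / ‖w‖ with hc
        have hcpos : 0 < c := div_pos hd hw
        have hnorm : ‖c • w‖ ≤ d := by
          rw [norm_smul, Real.norm_eq_abs, abs_of_pos hcpos, hc, div_mul_cancel₀ _ (ne_of_gt hw)]
        obtain ⟨x, hx1, hx2⟩ := hsur (c • w) hnorm
        have h3 : g (c • w) = a x := by rw [haapp, hx2]
        have h4 : ‖g (c • w)‖ ≤ ‖a‖ := by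
          calc ‖g (c • w)‖ = ‖a x‖ := by rw [h3]
            _ ≤ ‖a‖ * ‖x‖ := a.le_opNorm x
            _ ≤ ‖a‖ * 1 := by gcongr
            _ = ‖a‖ := mul_one _
        have h5 : g (c • w) = c * g w := by rw [map_smul]; rfl
        rw [h5, Real.norm_eq_abs, abs_mul, abs_of_pos hcpos, hc] at h4
        rw [Real.norm_eq_abs]
        have h6 : d * |g w| ≤ ‖a‖ * ‖w‖ := by
          rw [div_mul_eq_mul_div, div_le_iff₀ hw] at h4
          linarith
        rw [div_mul_eq_mul_div, le_div_iff₀ hd]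
        linarith
    calc d * ‖g‖ ≤ d * (‖a‖ / d) := by gcongr
      _ = ‖a‖ := by field_simp
  -- unfold chi
  rw [chiOp, hchi]
  set A : Set (StrongDual ℝ X) := adjOp T '' closedBall 0 1 with hA
  set R : Set ℝ := { r : ℝ | ∃ F : Finset (StrongDual ℝ X), ∀ a ∈ A, ∃ y ∈ F, dist a y ≤ r } with hR
  have hRne : R.Nonempty := by
    refine ⟨‖adjOp T‖, {0}, ?_⟩
    rintro a ⟨y', hy', rfl⟩
    refine ⟨0, Finset.mem_singleton_self 0, ?_⟩
    rw [mem_closedBall_zero_iff] at hy'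
    rw [dist_zero_right]
    calc ‖adjOp T y'‖ ≤ ‖adjOp T‖ * ‖y'‖ := (adjOp T).le_opNorm y'
      _ ≤ ‖adjOp T‖ * 1 := by gcongr
      _ = _ := mul_one _
  have main : ∀ r ∈ R, d ≤ 2 * r := by
    rintro r ⟨F, hF⟩
    by_contra hcon
    push_neg at hcon
    have hlt : 2 * r / d < 1 := (div_lt_one hd).2 hcon
    obtain ⟨ρ, hρ1, hρ2⟩ := exists_between hlt
    -- selection function
    set P : StrongDual ℝ X → Prop := fun f =>
      ∃ g : StrongDual ℝ (Y ⧸ N), ‖g‖ ≤ 1 ∧ ‖adjOp T (g.comp Q) - f‖ ≤ r with hP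
    set sel : StrongDual ℝ X → StrongDual ℝ (Y ⧸ N) := fun f => if h : P f then h.choose else 0 with hsel
    set M : Submodule ℝ (StrongDual ℝ (Y ⧸ N)) := Submodule.span ℝ (sel '' (F : Set (StrongDual ℝ X)))
      with hM
    haveI hMfin : FiniteDimensional ℝ M :=
      FiniteDimensional.span_of_finite ℝ ((F.finite_toSet).image sel)
    have hMc : IsClosed (M : Set (StrongDual ℝ (Y ⧸ N))) := Submodule.closed_of_finiteDimensional M
    have hproper : ∃ φ : StrongDual ℝ (Y ⧸ N), φ ∉ M := by
      by_contra h
      push_neg at h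
      have htop : M = ⊤ := eq_top_iff.2 fun x _ => h x
      haveI : FiniteDimensional ℝ (⊤ : Submodule ℝ (StrongDual ℝ (Y ⧸ N))) := htop ▸ hMfin
      exact dual_infDim hinf (Submodule.topEquiv.finiteDimensional)
    obtain ⟨x₀, hx₀M, hx₀⟩ := @riesz_lemma ℝ _ (StrongDual ℝ (Y ⧸ N)) _ _ M hMc hproper _ hρ2
    have hx₀ne : x₀ ≠ 0 := fun h => hx₀M (h ▸ M.zero_mem)
    have hx₀pos : 0 < ‖x₀‖ := (norm_pos_iff (E := StrongDual ℝ (Y ⧸ N))).2 hx₀ne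
    haveI : NormSMulClass ℝ (StrongDual ℝ (Y ⧸ N)) :=
      @NormedSpace.toNormSMulClass ℝ (StrongDual ℝ (Y ⧸ N)) _ _ ContinuousLinearMap.toNormedSpace
    set g : StrongDual ℝ (Y ⧸ N) := ‖x₀‖⁻¹ • x₀ with hg
    have hg1 : ‖g‖ = 1 := by
      rw [hg, norm_smul, Real.norm_eq_abs, abs_of_pos (inv_pos.2 hx₀pos),
        inv_mul_cancel₀ (ne_of_gt hx₀pos)]
    have hgQ : ‖g.comp Q‖ ≤ 1 := by
      calc ‖g.comp Q‖ ≤ ‖g‖ * ‖Q‖ := ContinuousLinearMap.opNorm_comp_le _ _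
        _ ≤ 1 * 1 := mul_le_mul hg1.le hQnorm (norm_nonneg Q) zero_le_one
        _ = 1 := mul_one _
    have hamem : adjOp T (g.comp Q) ∈ A := ⟨g.comp Q, mem_closedBall_zero_iff.2 hgQ, rfl⟩
    obtain ⟨f, hfF, hfa⟩ := hF _ hamem
    have hPf : P f := ⟨g, le_of_eq hg1, by rwa [← dist_eq_norm]⟩
    set g' : StrongDual ℝ (Y ⧸ N) := sel f with hg'
    have hg'spec : ‖g'‖ ≤ 1 ∧ ‖adjOp T (g'.comp Q) - f‖ ≤ r := by
      rw [hg', hsel]; simp only [dif_pos hPf]; exact hPf.choose_spec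
    have hg'M : g' ∈ M := Submodule.subset_span ⟨f, hfF, rfl⟩
    -- distance estimate
    have hdiff : ‖g - g'‖ ≤ 2 * r / d := by
      have h2 : ‖adjOp T ((g - g').comp Q)‖ ≤ 2 * r := by
        have he : (g - g').comp Q = g.comp Q - g'.comp Q := ContinuousLinearMap.sub_comp _ _ _
        rw [he, map_sub]
        calc ‖adjOp T (g.comp Q) - adjOp T (g'.comp Q)‖
            ≤ ‖adjOp T (g.comp Q) - f‖ + ‖f - adjOp T (g'.comp Q)‖ := norm_sub_le_norm_sub_add_norm_sub _ _ _
          _ ≤ r + r := by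
              refine add_le_add ?_ ?_
              · rwa [← dist_eq_norm]
              · rw [norm_sub_rev]; exact hg'spec.2
          _ = 2 * r := by ring
      have := key (g - g')
      rw [le_div_iff₀ hd, mul_comm]
      exact this.trans h2
    -- riesz estimate
    have hrr : ρ * ‖x₀‖ ≤ ‖x₀ - ‖x₀‖ • g'‖ := hx₀ _ (M.smul_mem _ hg'M)
    have hx₀eq : x₀ = ‖x₀‖ • g := by
      rw [hg, smul_smul, mul_inv_cancel₀ (ne_of_gt hx₀pos), one_smul]
    have hfinal : ρ ≤ ‖g - g'‖ := by
      have heq : x₀ - ‖x₀‖ • g' = ‖x₀‖ • (g - g') := by rw [smul_sub, ← hx₀eq]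
      rw [heq, norm_smul, Real.norm_eq_abs, abs_of_pos hx₀pos] at hrr
      exact le_of_mul_le_mul_left (by rwa [mul_comm ρ _] at hrr) hx₀pos
    linarith [hfinal.trans hdiff]
  have : d / 2 ≤ sInf R := le_csInf hRne (fun r hr => by linarith [main r hr])
  linarith


theorem stmt5 {X Y : Type*} [NormedAddCommGroup X] [NormedSpace ℝ X] [CompleteSpace X]
    [NormedAddCommGroup Y] [NormedSpace ℝ Y] [CompleteSpace Y] (T : X →L[ℝ] Y) :
    SCS T ≤ 2 * chiOp (adjOp T) := by
  have hchi0 : 0 ≤ 2 * chiOp (adjOp T) := by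
    have h0 : 0 ≤ chiOp (adjOp T) := by
      apply Real.sInf_nonneg
      rintro r ⟨F, hF⟩
      obtain ⟨y, _, hy⟩ := hF (adjOp T 0) ⟨0, by simp, rfl⟩
      exact le_trans dist_nonneg hy
    linarith
  rw [SCS]
  apply Real.sSup_le _ hchi0
  rintro r ⟨N, hNc, hinf, _, rfl⟩
  rw [deltaQ]
  apply Real.sSup_le _ hchi0
  rintro dd ⟨hdd, hsur⟩
  exact core_lemma T N hNc hinf hdd hsur
end

section
/- For any bounded operator T: X → Y between Banach spaces, SCS(T) ≤ SS(T*), where SCS(T) = sup{δ(Q_N T) : N infinite-codimensional closed subspace of Y with Q_N T surjective} and SS(T*) = sup over infinite-dimensional closed subspaces M of Y* of inf{‖T*y*‖ : y* ∈ M, ‖y*‖ = 1}. -/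
open NormedSpace Metric Set Filter
open scoped ENNReal

noncomputable section AuxForStmt6
variable {X Y : Type*} [NormedAddCommGroup X] [NormedSpace ℝ X]
  [NormedAddCommGroup Y] [NormedSpace ℝ Y]

lemma exists_unit_of_not_fd (M : Submodule ℝ Y) (h : ¬ FiniteDimensional ℝ M) :
    ∃ f ∈ M, ‖f‖ = 1 := by
  have hbot : M ≠ ⊥ := by rintro rfl; exact h inferInstance
  obtain ⟨x, hxM, hx0⟩ := Submodule.exists_mem_ne_zero_of_ne_bot hbot
  exact ⟨(‖x‖⁻¹ : ℝ) • x, M.smul_mem _ hxM, norm_smul_inv_norm (𝕜 := ℝ) hx0⟩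

lemma annih_closed (N : Submodule ℝ Y) :
    IsClosed ((annih N : Submodule ℝ (StrongDual ℝ Y)) : Set (StrongDual ℝ Y)) := by
  have : ((annih N : Submodule ℝ (StrongDual ℝ Y)) : Set (StrongDual ℝ Y))
      = ⋂ y ∈ N, {f : StrongDual ℝ Y | f y = 0} := by
    ext f; simp [annih, Submodule.mem_carrier]
  rw [this]
  exact isClosed_biInter fun y _ =>
    isClosed_eq ((ContinuousLinearMap.apply ℝ ℝ y).continuous) continuous_const

lemma annih_not_fd {N : Submodule ℝ Y} (hNc : IsClosed (N : Set Y))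
    (hNfd : ¬ FiniteDimensional ℝ (Y ⧸ N)) : ¬ FiniteDimensional ℝ (annih N) := by
  intro hfin
  apply hNfd
  haveI : IsClosed (N : Set Y) := hNc
  let Ψ₀ : Y →ₗ[ℝ] Module.Dual ℝ (annih N) :=
    { toFun := fun y =>
        { toFun := fun f => (f : StrongDual ℝ Y) y
          map_add' := by intro f g; rfl
          map_smul' := by intro c f; rfl }
      map_add' := by intro a b; ext f; simp
      map_smul' := by intro c a; ext f; simp }
  have hker : N ≤ LinearMap.ker Ψ₀ := by
    intro y hy
    ext f
    exact f.2 y hy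
  let Ψ := N.liftQ Ψ₀ hker
  have hinj : Function.Injective Ψ := by
    rw [← LinearMap.ker_eq_bot]
    apply LinearMap.ker_eq_bot'.mpr
    intro w hw
    obtain ⟨y, rfl⟩ := Submodule.Quotient.mk_surjective N w
    have hΨ : Ψ₀ y = 0 := hw
    by_contra hne
    have hmk : (Submodule.Quotient.mk y : Y ⧸ N) ≠ 0 := hne
    obtain ⟨g, hg1, hgv⟩ := exists_dual_vector ℝ _ (norm_ne_zero_iff.2 hmk)
    let mkclm : Y →L[ℝ] (Y ⧸ N) := { toLinearMap := N.mkQ, cont := continuous_quot_mk }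
    let f : StrongDual ℝ Y := g.comp mkclm
    have hfA : f ∈ annih N := by
      intro z hz
      show g (N.mkQ z) = 0
      have : N.mkQ z = 0 := (Submodule.Quotient.mk_eq_zero N).2 hz
      rw [this, map_zero]
    have h1 : Ψ₀ y ⟨f, hfA⟩ = 0 := by rw [hΨ]; rfl
    have h1' : f y = 0 := h1
    have h2 : f y = ‖(Submodule.Quotient.mk y : Y ⧸ N)‖ := hgv
    rw [h2] at h1'
    exact hmk (norm_eq_zero.1 h1')
  haveI : FiniteDimensional ℝ (Module.Dual ℝ (annih N)) :=
    @Subspace.instModuleDualFiniteDimensional ℝ (annih N) _ _ _ hfin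
  exact FiniteDimensional.of_injective Ψ hinj

lemma key_delta_le {N : Submodule ℝ Y} (T : X →L[ℝ] Y)
    (f : StrongDual ℝ Y) (hfN : ∀ y ∈ N, f y = 0) (hf1 : ‖f‖ = 1)
    {d : ℝ} (hd0 : 0 < d)
    (hd : ∀ w : Y ⧸ N, ‖w‖ ≤ d → ∃ x : X, ‖x‖ ≤ 1 ∧ (Submodule.Quotient.mk (T x) : Y ⧸ N) = w) :
    d ≤ ‖adjOp T f‖ := by
  by_contra hlt
  push_neg at hlt
  set A := ‖adjOp T f‖ with hA
  have hA0 : 0 ≤ A := norm_nonneg _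
  have hc1 : A / d < 1 := (div_lt_one hd0).2 hlt
  have hlt1 : A / d < ‖f‖ := by rw [hf1]; exact hc1
  obtain ⟨y₀, hy1₀, hyv₀⟩ := f.exists_lt_apply_of_lt_opNorm hlt1
  obtain ⟨y, hy1, hyv⟩ : ∃ y : Y, ‖y‖ < 1 ∧ A / d < f y := by
    rcases le_or_gt 0 (f y₀) with h | h
    · exact ⟨y₀, hy1₀, by simpa [Real.norm_eq_abs, abs_of_nonneg h] using hyv₀⟩
    · refine ⟨-y₀, by simpa using hy1₀, ?_⟩
      have : A / d < |f y₀| := by simpa [Real.norm_eq_abs] using hyv₀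
      rw [abs_of_neg h] at this
      simpa using this
  have hw : ‖(Submodule.Quotient.mk (d • y) : Y ⧸ N)‖ ≤ d := by
    calc ‖(Submodule.Quotient.mk (d • y) : Y ⧸ N)‖ ≤ ‖d • y‖ :=
          Submodule.Quotient.norm_mk_le _ _
      _ = |d| * ‖y‖ := by rw [norm_smul, Real.norm_eq_abs]
      _ ≤ d * 1 := by
          rw [abs_of_pos hd0]
          exact mul_le_mul_of_nonneg_left hy1.le hd0.le
      _ = d := mul_one d
  obtain ⟨x, hx1, hxw⟩ := hd _ hw
  have hmem : T x - d • y ∈ N := (Submodule.Quotient.eq N).1 hxw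
  have hfx : f (T x) = d * f y := by
    have h0 := hfN _ hmem
    rw [map_sub, map_smul, sub_eq_zero] at h0
    simpa using h0
  have h1 : A < f (T x) := by
    rw [hfx]
    calc A = d * (A / d) := by field_simp
      _ < d * f y := mul_lt_mul_of_pos_left hyv hd0
  have h2 : f (T x) ≤ A := by
    have h2a : f (T x) ≤ |f (T x)| := le_abs_self _
    have h3 : |f (T x)| = ‖(adjOp T f) x‖ := by
      simp [Real.norm_eq_abs]; rfl
    have h4 : ‖(adjOp T f) x‖ ≤ A * ‖x‖ := (adjOp T f).le_opNorm x
    have h5 : A * ‖x‖ ≤ A := by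
      calc A * ‖x‖ ≤ A * 1 := mul_le_mul_of_nonneg_left hx1 hA0
        _ = A := mul_one A
    linarith
  linarith

end AuxForStmt6

theorem stmt6 {X Y : Type*} [NormedAddCommGroup X] [NormedSpace ℝ X] [CompleteSpace X]
    [NormedAddCommGroup Y] [NormedSpace ℝ Y] [CompleteSpace Y] (T : X →L[ℝ] Y) :
    SCS T ≤ SS (adjOp T) := by
  set B := { c : ℝ | ∃ M : Submodule ℝ (StrongDual ℝ Y), IsClosed (M : Set (StrongDual ℝ Y)) ∧
      ¬ FiniteDimensional ℝ M ∧
      c = sInf { r : ℝ | ∃ x ∈ M, ‖x‖ = 1 ∧ r = ‖adjOp T x‖ } } with hBdef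
  have hSS : SS (adjOp T) = sSup B := rfl
  have hBdd : BddAbove B := by
    refine ⟨‖adjOp T‖, ?_⟩
    rintro c ⟨M, hMc, hMfd, rfl⟩
    obtain ⟨f, hfM, hf1⟩ := exists_unit_of_not_fd M hMfd
    refine csInf_le_of_le ⟨0, ?_⟩ ⟨f, hfM, hf1, rfl⟩ ?_
    · rintro r ⟨x, _, _, rfl⟩; positivity
    · calc ‖adjOp T f‖ ≤ ‖adjOp T‖ * ‖f‖ := (adjOp T).le_opNorm f
        _ = ‖adjOp T‖ := by rw [hf1, mul_one]
  have hBnonneg : ∀ c ∈ B, 0 ≤ c := by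
    rintro c ⟨M, hMc, hMfd, rfl⟩
    exact Real.sInf_nonneg (by rintro r ⟨x, _, _, rfl⟩; positivity)
  have hSS0 : 0 ≤ SS (adjOp T) := by
    rw [hSS]
    rcases B.eq_empty_or_nonempty with h | ⟨c, hc⟩
    · rw [h]; simp [Real.sSup_empty]
    · exact le_trans (hBnonneg c hc) (le_csSup hBdd hc)
  apply Real.sSup_le _ hSS0
  rintro r ⟨N, hNc, hNfd, hsurj, rfl⟩
  have hAfd := annih_not_fd hNc hNfd
  have hcB : sInf { r : ℝ | ∃ x ∈ annih N, ‖x‖ = 1 ∧ r = ‖adjOp T x‖ } ∈ B :=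
    ⟨annih N, annih_closed N, hAfd, rfl⟩
  have hle : deltaQ (fun x : X => (Submodule.Quotient.mk (T x) : Y ⧸ N))
      ≤ sInf { r : ℝ | ∃ x ∈ annih N, ‖x‖ = 1 ∧ r = ‖adjOp T x‖ } := by
    apply Real.sSup_le
    · rintro d ⟨hd0, hd⟩
      apply le_csInf
      · obtain ⟨f, hf, hf1⟩ := exists_unit_of_not_fd _ hAfd
        exact ⟨‖adjOp T f‖, f, hf, hf1, rfl⟩
      · rintro b ⟨f, hfA, hf1, rfl⟩
        exact key_delta_le T f (fun y hy => hfA y hy) hf1 hd0 hd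
    · exact Real.sInf_nonneg (by rintro b ⟨f, _, _, rfl⟩; positivity)
  rw [hSS]
  exact hle.trans (le_csSup hBdd hcB)
end

section
/- For any bounded operator T: X → Y between Banach spaces, SS(T) ≤ SCS(T*): if there is an infinite-dimensional closed subspace M of X with ‖Tx‖ ≥ c‖x‖ for all x ∈ M, then c·B_{X*/M^⊥} ⊆ Q_{M^⊥} T*(B_{Y*}), so Q_{M^⊥}T* is surjective and δ(Q_{M^⊥}T*) ≥ c. -/
open NormedSpace Metric Set Filter
open scoped ENNReal

noncomputable section

variable {X Y Z : Type*} [NormedAddCommGroup X] [NormedSpace ℝ X]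
  [NormedAddCommGroup Y] [NormedSpace ℝ Y]

/-- auxiliary: adjoint applied. -/
lemma adjOp_apply' (T : X →L[ℝ] Y) (g : StrongDual ℝ Y) (x : X) : adjOp T g x = g (T x) := rfl

lemma mem_annih_iff {M : Submodule ℝ X} {f : StrongDual ℝ X} :
    f ∈ annih M ↔ ∀ x ∈ M, f x = 0 := Iff.rfl

lemma annih_isClosed (M : Submodule ℝ X) :
    IsClosed ((annih M : Submodule ℝ (StrongDual ℝ X)) : Set (StrongDual ℝ X)) := by
  have h : ((annih M : Submodule ℝ (StrongDual ℝ X)) : Set (StrongDual ℝ X)) =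
      ⋂ x ∈ M, {f : StrongDual ℝ X | f x = 0} := by
    ext f
    simp only [Set.mem_iInter, Set.mem_setOf_eq, SetLike.mem_coe]
    exact mem_annih_iff
  rw [h]
  refine isClosed_biInter fun x hx => isClosed_eq ?_ continuous_const
  exact (inclusionInDoubleDual ℝ X x).continuous

lemma norm_mk_pos_of_not_mem {W : Type*} [NormedAddCommGroup W] [NormedSpace ℝ W]
    {S : Submodule ℝ W} (hS : IsClosed (S : Set W)) {f : W} (hf : f ∉ S) :
    0 < ‖(Submodule.Quotient.mk f : W ⧸ S)‖ := by
  have h0 : ‖(Submodule.Quotient.mk f : W ⧸ S)‖ ≠ 0 := by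
    intro h
    have h2 : f ∈ closure (S : Set W) := (QuotientAddGroup.norm_mk_eq_zero_iff_mem_closure (S := S.toAddSubgroup) (m := f)).mp h
    rw [hS.closure_eq] at h2
    exact hf h2
  exact lt_of_le_of_ne (norm_nonneg _) (Ne.symm h0)

/-- Hahn–Banach extension step: key first bullet. -/
lemma extension_step (T : X →L[ℝ] Y) (M : Submodule ℝ X) (c : ℝ) (hc : 0 < c)
    (hTc : ∀ x ∈ M, c * ‖x‖ ≤ ‖T x‖) (φ : StrongDual ℝ X ⧸ annih M) (hφ : ‖φ‖ ≤ c) :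
    ∃ g : StrongDual ℝ Y, ‖g‖ ≤ 1 ∧
      (Submodule.Quotient.mk (adjOp T g) : StrongDual ℝ X ⧸ annih M) = φ := by
  obtain ⟨f, hf⟩ := Submodule.Quotient.mk_surjective (annih M) φ
  have hfM : ∀ x ∈ M, |f x| ≤ c * ‖x‖ := by
    intro x hx
    refine le_of_forall_pos_le_add fun ε hε => ?_
    have hd : (0:ℝ) < ‖x‖ + 1 := by positivity
    have hε' : 0 < ε / (‖x‖ + 1) := div_pos hε hd
    obtain ⟨f', hf', hnf'⟩ := Submodule.Quotient.norm_mk_lt φ hε'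
    have hdiff : f' - f ∈ annih M := by
      rw [← Submodule.Quotient.eq]
      rw [hf', hf]
    have hval : f' x = f x := by
      have h0 := hdiff x hx
      simp only [ContinuousLinearMap.sub_apply] at h0
      linarith
    have h1 : |f x| ≤ ‖f'‖ * ‖x‖ := by
      rw [← hval, ← Real.norm_eq_abs]
      exact f'.le_opNorm x
    have h2 : ‖f'‖ ≤ c + ε / (‖x‖ + 1) := by linarith
    have h3 : (ε / (‖x‖ + 1)) * ‖x‖ ≤ ε := by
      rw [div_mul_eq_mul_div, div_le_iff₀ hd]
      nlinarith [norm_nonneg x]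
    have h4 : ‖f'‖ * ‖x‖ ≤ (c + ε / (‖x‖ + 1)) * ‖x‖ :=
      mul_le_mul_of_nonneg_right h2 (norm_nonneg x)
    have h5 : (c + ε / (‖x‖ + 1)) * ‖x‖ = c * ‖x‖ + (ε / (‖x‖ + 1)) * ‖x‖ := add_mul _ _ _
    linarith
  -- the image N = T(M)
  set N : Submodule ℝ Y := M.map (T : X →ₗ[ℝ] Y) with hN
  have hmem : ∀ x : M, T (x : X) ∈ N := fun x => ⟨x, x.2, rfl⟩
  let r : M →ₗ[ℝ] N :=
    { toFun := fun x => ⟨T (x : X), hmem x⟩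
      map_add' := by intro a b; apply Subtype.ext; simp
      map_smul' := by intro a b; apply Subtype.ext; simp }
  have hrinj : Function.Injective r := by
    intro a b hab
    have h0 : T ((a : X) - (b : X)) = 0 := by
      have := congrArg Subtype.val hab
      simp only [r, LinearMap.coe_mk, AddHom.coe_mk] at this
      rw [map_sub, this, sub_self]
    have h1 : c * ‖(a : X) - (b : X)‖ ≤ ‖T ((a : X) - (b : X))‖ :=
      hTc _ (sub_mem a.2 b.2)
    rw [h0, norm_zero] at h1
    have h2 : ‖(a : X) - (b : X)‖ ≤ 0 := by
      by_contra hcon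
      push_neg at hcon
      nlinarith
    apply Subtype.ext
    have := norm_le_zero_iff.mp h2
    exact sub_eq_zero.mp this
  have hrsurj : Function.Surjective r := by
    rintro ⟨y, hy⟩
    obtain ⟨x, hx, rfl⟩ := hy
    exact ⟨⟨x, hx⟩, rfl⟩
  let e := LinearEquiv.ofBijective r ⟨hrinj, hrsurj⟩
  let h : N →ₗ[ℝ] ℝ := (f : X →ₗ[ℝ] ℝ) ∘ₗ (M.subtype ∘ₗ e.symm.toLinearMap)
  have hbound : ∀ y : N, ‖h y‖ ≤ 1 * ‖y‖ := by
    intro y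
    set x := e.symm y with hx
    have hxy : (T (x : X) : Y) = (y : N) := by
      have : e x = y := e.apply_symm_apply y
      exact congrArg Subtype.val this
    have h1 : |f (x : X)| ≤ c * ‖(x : X)‖ := hfM _ x.2
    have h2 : c * ‖(x : X)‖ ≤ ‖T (x : X)‖ := hTc _ x.2
    have h3 : ‖h y‖ = |f (x : X)| := by
      simp only [h, LinearMap.coe_comp, Function.comp_apply, Real.norm_eq_abs]
      rfl
    have h4 : ‖y‖ = ‖T (x : X)‖ := by
      rw [show ‖y‖ = ‖(y : Y)‖ from rfl, hxy]
    rw [h3, one_mul, h4]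
    linarith
  let hC : N →L[ℝ] ℝ := LinearMap.mkContinuous h 1 hbound
  obtain ⟨g, hg1, hg2⟩ := exists_extension_norm_eq N hC
  refine ⟨g, ?_, ?_⟩
  · rw [hg2]
    exact LinearMap.mkContinuous_norm_le h zero_le_one hbound
  · rw [← hf, Submodule.Quotient.eq]
    intro x hx
    have hTx : T x ∈ N := ⟨x, hx, rfl⟩
    have hsymm : e.symm ⟨T x, hTx⟩ = ⟨x, hx⟩ := by
      apply e.injective
      rw [e.apply_symm_apply]
      rfl
    have hgx : g (T x) = f x := by
      have h5 : g (T x) = hC ⟨T x, hTx⟩ := hg1 ⟨T x, hTx⟩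
      have h6 : hC ⟨T x, hTx⟩ = h ⟨T x, hTx⟩ := rfl
      have h7 : h ⟨T x, hTx⟩ = f ((e.symm ⟨T x, hTx⟩ : M) : X) := rfl
      rw [h5, h6, h7, hsymm]
    show (adjOp T g - f) x = 0
    simp only [ContinuousLinearMap.sub_apply, adjOp_apply' T g x, hgx, sub_self]

/-- Surjectivity and deltaQ bound derived from the extension step. -/
lemma surj_step (T : X →L[ℝ] Y) (M : Submodule ℝ X) (c : ℝ) (hc : 0 < c)
    (hTc : ∀ x ∈ M, c * ‖x‖ ≤ ‖T x‖) :
    Function.Surjective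
      (fun g : StrongDual ℝ Y => (Submodule.Quotient.mk (adjOp T g) : StrongDual ℝ X ⧸ annih M)) := by
  intro φ
  set s : ℝ := c / (‖φ‖ + c) with hs
  have hden : (0:ℝ) < ‖φ‖ + c := by positivity
  have hspos : 0 < s := div_pos hc hden
  have hφs : ‖s • φ‖ ≤ c := by
    haveI : NormSMulClass ℝ (StrongDual ℝ X ⧸ annih M) :=
      NormedDivisionRing.toNormSMulClass (α := ℝ) (β := StrongDual ℝ X ⧸ annih M)
    rw [norm_smul s φ, Real.norm_eq_abs, abs_of_pos hspos, hs, div_mul_eq_mul_div, div_le_iff₀ hden]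
    nlinarith [norm_nonneg φ]
  obtain ⟨g, hg1, hg2⟩ := extension_step T M c hc hTc (s • φ) hφs
  refine ⟨s⁻¹ • g, ?_⟩
  have : adjOp T (s⁻¹ • g) = s⁻¹ • adjOp T g := map_smul _ _ _
  show (Submodule.Quotient.mk (adjOp T (s⁻¹ • g)) : StrongDual ℝ X ⧸ annih M) = φ
  rw [this, Submodule.Quotient.mk_smul, hg2, smul_smul, inv_mul_cancel₀ (ne_of_gt hspos),
    one_smul]

/-- Elements of the deltaQ-defining set are bounded by the operator norm. -/
lemma deltaQ_elt_le (T : X →L[ℝ] Y) (S : Submodule ℝ (StrongDual ℝ X))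
    (hS : IsClosed (S : Set (StrongDual ℝ X))) (hne : ∃ f : StrongDual ℝ X, f ∉ S) {d : ℝ}
    (hd : 0 < d ∧ ∀ w : StrongDual ℝ X ⧸ S, ‖w‖ ≤ d → ∃ g : StrongDual ℝ Y, ‖g‖ ≤ 1 ∧
      (Submodule.Quotient.mk (adjOp T g) : StrongDual ℝ X ⧸ S) = w) :
    d ≤ ‖adjOp T‖ := by
  obtain ⟨f0, hf0⟩ := hne
  have hpos := norm_mk_pos_of_not_mem hS hf0
  set w : StrongDual ℝ X ⧸ S := (d / ‖(Submodule.Quotient.mk f0 : StrongDual ℝ X ⧸ S)‖) •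
    (Submodule.Quotient.mk f0 : StrongDual ℝ X ⧸ S) with hw
  have hwnorm : ‖w‖ = d := by
    haveI : NormSMulClass ℝ (StrongDual ℝ X ⧸ S) :=
      NormedDivisionRing.toNormSMulClass (α := ℝ) (β := StrongDual ℝ X ⧸ S)
    rw [hw, norm_smul (d / ‖(Submodule.Quotient.mk f0 : StrongDual ℝ X ⧸ S)‖)
        (Submodule.Quotient.mk f0 : StrongDual ℝ X ⧸ S), Real.norm_eq_abs,
      abs_of_pos (div_pos hd.1 hpos), div_mul_cancel₀ _ (ne_of_gt hpos)]
  obtain ⟨g, hg1, hg2⟩ := hd.2 w (le_of_eq hwnorm)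
  calc d = ‖w‖ := hwnorm.symm
    _ = ‖(Submodule.Quotient.mk (adjOp T g) : StrongDual ℝ X ⧸ S)‖ := by rw [hg2]
    _ ≤ ‖adjOp T g‖ := Submodule.Quotient.norm_mk_le _ _
    _ ≤ ‖adjOp T‖ * ‖g‖ := (adjOp T).le_opNorm g
    _ ≤ ‖adjOp T‖ * 1 := by
        exact mul_le_mul_of_nonneg_left hg1 (adjOp T).opNorm_nonneg
    _ = ‖adjOp T‖ := mul_one _

/-- Nontriviality of M passes to nontriviality of the dual quotient. -/
lemma exists_not_mem_annih (M : Submodule ℝ X) (hM : ¬ FiniteDimensional ℝ M) :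
    ∃ f : StrongDual ℝ X, f ∉ annih M := by
  have hMne : ∃ x : X, x ∈ M ∧ x ≠ 0 := by
    by_contra hcon
    push_neg at hcon
    have : M = ⊥ := by
      ext x
      simp only [Submodule.mem_bot]
      exact ⟨fun hx => hcon x hx, fun hx => by rw [hx]; exact M.zero_mem⟩
    rw [this] at hM
    exact hM inferInstance
  obtain ⟨x0, hx0M, hx0⟩ := hMne
  obtain ⟨f, hf1, hf2⟩ := exists_dual_vector ℝ x0 (norm_ne_zero_iff.mpr hx0)
  refine ⟨f, fun hf => ?_⟩
  have := hf x0 hx0M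
  rw [this] at hf2
  have : ‖x0‖ = 0 := by exact_mod_cast hf2.symm
  exact hx0 (norm_eq_zero.mp this)

/-- If the dual quotient is finite dimensional, so is M. -/
lemma findim_of_quotient_findim (M : Submodule ℝ X)
    (h : FiniteDimensional ℝ (StrongDual ℝ X ⧸ annih M)) : FiniteDimensional ℝ M := by
  -- restriction map
  let ρ : StrongDual ℝ X →ₗ[ℝ] StrongDual ℝ M :=
    { toFun := fun f => f.comp M.subtypeL
      map_add' := by intro a b; ext x; rfl
      map_smul' := by intro a b; ext x; rfl }
  have hle : annih M ≤ LinearMap.ker ρ := by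
    intro f hf
    rw [LinearMap.mem_ker]
    ext x
    exact hf x x.2
  let q := Submodule.liftQ (annih M) ρ hle
  have hρsurj : Function.Surjective ρ := by
    intro m
    obtain ⟨g, hg1, _⟩ := exists_extension_norm_eq M m
    refine ⟨g, ?_⟩
    ext x
    exact hg1 x
  have hqsurj : Function.Surjective q := by
    intro m
    obtain ⟨f, hf⟩ := hρsurj m
    exact ⟨Submodule.Quotient.mk f, hf⟩
  have hDual : FiniteDimensional ℝ (StrongDual ℝ M) := Module.Finite.of_surjective q hqsurj
  -- double dual embedding
  have hinj : Function.Injective ((inclusionInDoubleDualLi ℝ (E := M)) : M →ₗᵢ[ℝ] _) :=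
    (inclusionInDoubleDualLi ℝ (E := M)).injective
  exact FiniteDimensional.of_injective
    ((inclusionInDoubleDualLi ℝ (E := M)).toLinearMap) hinj

end


theorem stmt7 {X Y : Type*} [NormedAddCommGroup X] [NormedSpace ℝ X] [CompleteSpace X]
    [NormedAddCommGroup Y] [NormedSpace ℝ Y] [CompleteSpace Y] (T : X →L[ℝ] Y) :
    SS T ≤ SCS (adjOp T) ∧
    ∀ (M : Submodule ℝ X), IsClosed (M : Set X) → ¬ FiniteDimensional ℝ M →
      ∀ c : ℝ, 0 < c → (∀ x ∈ M, c * ‖x‖ ≤ ‖T x‖) →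
        (∀ φ : StrongDual ℝ X ⧸ annih M, ‖φ‖ ≤ c → ∃ g : StrongDual ℝ Y, ‖g‖ ≤ 1 ∧
            (Submodule.Quotient.mk (adjOp T g) : StrongDual ℝ X ⧸ annih M) = φ) ∧
        Function.Surjective
          (fun g : StrongDual ℝ Y => (Submodule.Quotient.mk (adjOp T g) : StrongDual ℝ X ⧸ annih M)) ∧
        c ≤ deltaQ
          (fun g : StrongDual ℝ Y => (Submodule.Quotient.mk (adjOp T g) : StrongDual ℝ X ⧸ annih M)) := by
  have part2 : ∀ (M : Submodule ℝ X), IsClosed (M : Set X) → ¬ FiniteDimensional ℝ M →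
      ∀ c : ℝ, 0 < c → (∀ x ∈ M, c * ‖x‖ ≤ ‖T x‖) →
        (∀ φ : StrongDual ℝ X ⧸ annih M, ‖φ‖ ≤ c → ∃ g : StrongDual ℝ Y, ‖g‖ ≤ 1 ∧
            (Submodule.Quotient.mk (adjOp T g) : StrongDual ℝ X ⧸ annih M) = φ) ∧
        Function.Surjective
          (fun g : StrongDual ℝ Y => (Submodule.Quotient.mk (adjOp T g) : StrongDual ℝ X ⧸ annih M)) ∧
        c ≤ deltaQ
          (fun g : StrongDual ℝ Y => (Submodule.Quotient.mk (adjOp T g) : StrongDual ℝ X ⧸ annih M)) := by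
    intro M hMc hMfd c hc hTc
    refine ⟨fun φ hφ => extension_step T M c hc hTc φ hφ, surj_step T M c hc hTc, ?_⟩
    have hBdd : BddAbove {d : ℝ | 0 < d ∧ ∀ w : StrongDual ℝ X ⧸ annih M, ‖w‖ ≤ d →
        ∃ g : StrongDual ℝ Y, ‖g‖ ≤ 1 ∧
          (Submodule.Quotient.mk (adjOp T g) : StrongDual ℝ X ⧸ annih M) = w} :=
      ⟨‖adjOp T‖, fun d hd =>
        deltaQ_elt_le T (annih M) (annih_isClosed M) (exists_not_mem_annih M hMfd) hd⟩
    exact le_csSup hBdd ⟨hc, fun w hw => extension_step T M c hc hTc w hw⟩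
  refine ⟨?_, part2⟩
  have hSCSnn : 0 ≤ SCS (adjOp T) := by
    refine Real.sSup_nonneg fun r hr => ?_
    obtain ⟨N, _, _, _, hr⟩ := hr
    rw [hr]
    exact Real.sSup_nonneg fun d hd => le_of_lt hd.1
  refine Real.sSup_le ?_ hSCSnn
  rintro cc ⟨M, hMc, hMfd, hcc⟩
  rcases le_or_gt cc 0 with hcneg | hcpos
  · exact le_trans hcneg hSCSnn
  · have hTc : ∀ x ∈ M, cc * ‖x‖ ≤ ‖T x‖ := by
      intro x hx
      rcases eq_or_ne x 0 with rfl | hx0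
      · simp
      · have hxn : 0 < ‖x‖ := norm_pos_iff.mpr hx0
        have hu : (‖x‖⁻¹ • x) ∈ M := M.smul_mem _ hx
        have hun : ‖‖x‖⁻¹ • x‖ = 1 := by
          rw [norm_smul, Real.norm_eq_abs, abs_inv, abs_of_pos hxn,
            inv_mul_cancel₀ (ne_of_gt hxn)]
        have hmem : ‖T (‖x‖⁻¹ • x)‖ ∈ {r : ℝ | ∃ x ∈ M, ‖x‖ = 1 ∧ r = ‖T x‖} :=
          ⟨_, hu, hun, rfl⟩
        have hbdd : BddBelow {r : ℝ | ∃ x ∈ M, ‖x‖ = 1 ∧ r = ‖T x‖} := by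
          refine ⟨0, ?_⟩
          rintro r ⟨y, -, -, rfl⟩
          exact norm_nonneg _
        have hle : cc ≤ ‖T (‖x‖⁻¹ • x)‖ := by
          rw [hcc]
          exact csInf_le hbdd hmem
        have heq : ‖T (‖x‖⁻¹ • x)‖ = ‖x‖⁻¹ * ‖T x‖ := by
          rw [map_smul, norm_smul, Real.norm_eq_abs, abs_inv, abs_of_pos hxn]
        rw [heq] at hle
        calc cc * ‖x‖ ≤ (‖x‖⁻¹ * ‖T x‖) * ‖x‖ :=
              mul_le_mul_of_nonneg_right hle (norm_nonneg x)
          _ = ‖T x‖ := by field_simp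
    obtain ⟨hb1, hb2, hb3⟩ := part2 M hMc hMfd cc hcpos hTc
    have hmemSCS : deltaQ (fun g : StrongDual ℝ Y =>
        (Submodule.Quotient.mk (adjOp T g) : StrongDual ℝ X ⧸ annih M)) ∈
        {r : ℝ | ∃ N : Submodule ℝ (StrongDual ℝ X), IsClosed (N : Set (StrongDual ℝ X)) ∧
          ¬ FiniteDimensional ℝ (StrongDual ℝ X ⧸ N) ∧
          Function.Surjective (fun g : StrongDual ℝ Y =>
            (Submodule.Quotient.mk (adjOp T g) : StrongDual ℝ X ⧸ N)) ∧
          r = deltaQ (fun g : StrongDual ℝ Y =>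
            (Submodule.Quotient.mk (adjOp T g) : StrongDual ℝ X ⧸ N))} :=
      ⟨annih M, annih_isClosed M, fun hfin => hMfd (findim_of_quotient_findim M hfin),
        hb2, rfl⟩
    have hBddSCS : BddAbove {r : ℝ | ∃ N : Submodule ℝ (StrongDual ℝ X),
        IsClosed (N : Set (StrongDual ℝ X)) ∧ ¬ FiniteDimensional ℝ (StrongDual ℝ X ⧸ N) ∧
        Function.Surjective (fun g : StrongDual ℝ Y =>
          (Submodule.Quotient.mk (adjOp T g) : StrongDual ℝ X ⧸ N)) ∧
        r = deltaQ (fun g : StrongDual ℝ Y =>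
          (Submodule.Quotient.mk (adjOp T g) : StrongDual ℝ X ⧸ N))} := by
      refine ⟨‖adjOp T‖, ?_⟩
      rintro r ⟨N, hNc, hNfd, hNsurj, rfl⟩
      have hne : ∃ f : StrongDual ℝ X, f ∉ N := by
        by_contra hcon
        push_neg at hcon
        have hNtop : N = ⊤ := Submodule.eq_top_iff'.mpr hcon
        have hsub : Subsingleton (StrongDual ℝ X ⧸ N) :=
          Submodule.Quotient.subsingleton_iff.mpr hNtop
        exact hNfd (Module.Finite.of_surjective (0 : (Fin 1 → ℝ) →ₗ[ℝ] StrongDual ℝ X ⧸ N)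
          (fun w => ⟨0, Subsingleton.elim _ _⟩))
      exact Real.sSup_le (fun d hd => deltaQ_elt_le T N hNc hne hd) (adjOp T).opNorm_nonneg
    exact le_trans hb3 (le_csSup hBddSCS hmemSCS)
end
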